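/- arXiv:0901.1463 — 8 statements merged into one kernel-verified Lean document; each statement's English description precedes it below -/
import Mathlib

section
/- Let Ω be a bounded domain in ℝ^d with smooth boundary and a(x) a symmetric matrix field with L^∞ entries satisfying λ_min|ξ|² ≤ ξᵀa(x)ξ ≤ λ_max|ξ|² for all ξ. For ψ ∈ H¹₀(Ω), define the flux norm ‖ψ‖_{a-flux} := ‖(a∇ψ)_pot‖_{L²}, where (·)_pot denotes the orthogonal projection in (L²(Ω))^d onto the closure of {∇f : f ∈ C₀^∞(Ω)}. Then for all ψ ∈ H¹₀(Ω): λ_min ‖∇ψ‖_{L²} ≤ ‖ψ‖_{a-flux} ≤ λ_max ‖∇ψ‖_{L²}. In particular, ‖·‖_{a-flux} is a norm on H¹₀(Ω). -/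
open RealInnerProductSpace

/-- The flux norm `ψ ↦ ‖(a∇ψ)_pot‖_{L²}` on `H¹₀(Ω)` is equivalent to the
`H¹₀` (gradient `L²`) norm, with constants the ellipticity bounds of `a`, and is a norm.

Abstract encoding: `E` is the Hilbert space `(L²(Ω))^d`, `H` is `H¹₀(Ω)`,
`G` is the gradient operator (injective by the Poincaré inequality), `Kpot` is
`L²_pot(Ω)`, the closure of the gradients of `C₀^∞(Ω)` functions (equivalently, of
`H¹₀(Ω)` functions), `A` is multiplication by the symmetric matrix field `a(x)`,
whose pointwise ellipticity `λ_min|ξ|² ≤ ξᵀ a ξ ≤ λ_max|ξ|²` yields the symmetry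
and the Rayleigh-quotient bounds assumed below. `(·)_pot` is the orthogonal
projection onto `Kpot`. -/
theorem flux_norm_equivalence
    {E H : Type*}
    [NormedAddCommGroup E] [InnerProductSpace ℝ E] [CompleteSpace E]
    [AddCommGroup H] [Module ℝ H]
    (G : H →ₗ[ℝ] E) (hGinj : Function.Injective G)
    (Kpot : Submodule ℝ E) [Submodule.HasOrthogonalProjection Kpot]
    (hK : Kpot = (LinearMap.range G).topologicalClosure)
    (A : E →ₗ[ℝ] E) (lmin lmax : ℝ) (hlmin : 0 < lmin)
    (hsym : ∀ ξ η : E, ⟪A ξ, η⟫ = ⟪ξ, A η⟫)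
    (hell₁ : ∀ ξ : E, lmin * ‖ξ‖ ^ 2 ≤ ⟪ξ, A ξ⟫)
    (hell₂ : ∀ ξ : E, ⟪ξ, A ξ⟫ ≤ lmax * ‖ξ‖ ^ 2) :
    (∀ ψ : H,
        lmin * ‖G ψ‖ ≤ ‖(Kpot.orthogonalProjectionOnto (A (G ψ)) : E)‖ ∧
        ‖(Kpot.orthogonalProjectionOnto (A (G ψ)) : E)‖ ≤ lmax * ‖G ψ‖) ∧
    (∀ ψ : H, ‖(Kpot.orthogonalProjectionOnto (A (G ψ)) : E)‖ = 0 → ψ = 0) := by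
  -- membership of gradients in Kpot
  have hmem : ∀ ψ : H, G ψ ∈ Kpot := by
    intro ψ
    rw [hK]
    exact Submodule.le_topologicalClosure _ (LinearMap.mem_range_self G ψ)
  -- nonnegativity of the quadratic form
  have hq : ∀ ξ : E, 0 ≤ ⟪ξ, A ξ⟫ := fun ξ =>
    le_trans (by positivity) (hell₁ ξ)
  -- the off-diagonal bound via polarization + scaling
  have hAbound : ∀ ξ η : E, ξ ≠ 0 → η ≠ 0 → ⟪A ξ, η⟫ ≤ lmax * (‖ξ‖ * ‖η‖) := by
    intro ξ η hξ hη
    have hξn : 0 < ‖ξ‖ := norm_pos_iff.mpr hξ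
    have hηn : 0 < ‖η‖ := norm_pos_iff.mpr hη
    have hlmax : 0 < lmax := by
      have h1 := hell₁ ξ
      have h2 := hell₂ ξ
      have hx2 : 0 < ‖ξ‖ ^ 2 := by positivity
      nlinarith
    set t : ℝ := Real.sqrt ‖η‖ / Real.sqrt ‖ξ‖ with ht
    have hsξ : 0 < Real.sqrt ‖ξ‖ := Real.sqrt_pos.mpr hξn
    have hsη : 0 < Real.sqrt ‖η‖ := Real.sqrt_pos.mpr hηn
    have htpos : 0 < t := div_pos hsη hsξ
    set u : E := t • ξ with hu
    set v : E := t⁻¹ • η with hv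
    have hinner : ⟪A u, v⟫ = ⟪A ξ, η⟫ := by
      rw [hu, hv, map_smul, real_inner_smul_left, real_inner_smul_right]
      field_simp
    have hun : ‖u‖ = t * ‖ξ‖ := by
      rw [hu, norm_smul, Real.norm_eq_abs, abs_of_pos htpos]
    have hvn : ‖v‖ = t⁻¹ * ‖η‖ := by
      rw [hv, norm_smul, Real.norm_eq_abs, abs_of_pos (inv_pos.mpr htpos)]
    have hsq₁ : Real.sqrt ‖ξ‖ ^ 2 = ‖ξ‖ := Real.sq_sqrt hξn.le
    have hsq₂ : Real.sqrt ‖η‖ ^ 2 = ‖η‖ := Real.sq_sqrt hηn.le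
    have hu2 : ‖u‖ ^ 2 = ‖ξ‖ * ‖η‖ := by
      rw [hun, ht]; field_simp; nlinarith
    have hv2 : ‖v‖ ^ 2 = ‖ξ‖ * ‖η‖ := by
      rw [hvn, ht]; field_simp; nlinarith
    have huv : ‖u‖ * ‖v‖ = ‖ξ‖ * ‖η‖ := by
      rw [hun, hvn]
      field_simp
    -- polarization
    have hpol : 4 * ⟪A u, v⟫ = ⟪u + v, A (u + v)⟫ - ⟪u - v, A (u - v)⟫ := by
      have e1 : ⟪u, A v⟫ = ⟪A u, v⟫ := (hsym u v).symm
      have e2 : ⟪v, A u⟫ = ⟪A u, v⟫ := real_inner_comm (A u) v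
      simp only [map_add, map_sub, inner_add_left, inner_add_right,
        inner_sub_left, inner_sub_right]
      rw [e1, e2]; ring
    have h1 : ⟪u + v, A (u + v)⟫ ≤ lmax * ‖u + v‖ ^ 2 := hell₂ _
    have h2 : 0 ≤ ⟪u - v, A (u - v)⟫ := hq _
    have h3 : ‖u + v‖ ^ 2 = ‖u‖ ^ 2 + 2 * ⟪u, v⟫ + ‖v‖ ^ 2 := norm_add_sq_real u v
    have h4 : ⟪u, v⟫ ≤ ‖u‖ * ‖v‖ := real_inner_le_norm u v
    rw [← hinner]
    nlinarith
  have main : ∀ ψ : H,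
      lmin * ‖G ψ‖ ≤ ‖(Kpot.orthogonalProjectionOnto (A (G ψ)) : E)‖ ∧
      ‖(Kpot.orthogonalProjectionOnto (A (G ψ)) : E)‖ ≤ lmax * ‖G ψ‖ := by
    intro ψ
    set p : E := (Kpot.orthogonalProjectionOnto (A (G ψ)) : E) with hp
    by_cases hψ : G ψ = 0
    · have : p = 0 := by rw [hp, hψ, map_zero, map_zero, ZeroMemClass.coe_zero]
      rw [this, hψ]
      simp
    · have hGn : 0 < ‖G ψ‖ := norm_pos_iff.mpr hψ
      -- inner product with projection
      have hperp : ⟪A (G ψ) - p, G ψ⟫ = 0 :=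
        Submodule.starProjection_inner_eq_zero (K := Kpot) (A (G ψ)) (G ψ) (hmem ψ)
      have hip : ⟪G ψ, A (G ψ)⟫ = ⟪G ψ, p⟫ := by
        have h := hperp
        rw [inner_sub_left, sub_eq_zero] at h
        exact (real_inner_comm _ _).trans (h.trans (real_inner_comm _ _))
      -- lower bound
      have hlow : lmin * ‖G ψ‖ ≤ ‖p‖ := by
        have h1 := hell₁ (G ψ)
        have h2 : ⟪G ψ, p⟫ ≤ ‖G ψ‖ * ‖p‖ := real_inner_le_norm _ _
        rw [hip] at h1
        have : lmin * ‖G ψ‖ ^ 2 ≤ ‖G ψ‖ * ‖p‖ := le_trans h1 h2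
        nlinarith
      refine ⟨hlow, ?_⟩
      -- upper bound
      by_cases hpz : p = 0
      · rw [hpz, norm_zero]
        have hlmax : 0 < lmax := by
          have h1 := hell₁ (G ψ)
          have h2 := hell₂ (G ψ)
          have hx2 : 0 < ‖G ψ‖ ^ 2 := by positivity
          nlinarith
        positivity
      · have hpn : 0 < ‖p‖ := norm_pos_iff.mpr hpz
        have hperp' : ⟪A (G ψ) - p, p⟫ = 0 :=
          Submodule.starProjection_inner_eq_zero (K := Kpot) (A (G ψ)) p
            (by rw [hp]; exact (Kpot.orthogonalProjectionOnto (A (G ψ))).2)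
        have hp2 : ‖p‖ ^ 2 = ⟪A p, G ψ⟫ := by
          have h := hperp'
          rw [inner_sub_left, sub_eq_zero] at h
          calc ‖p‖ ^ 2 = ⟪p, p⟫ := (real_inner_self_eq_norm_sq p).symm
            _ = ⟪A (G ψ), p⟫ := h.symm
            _ = ⟪p, A (G ψ)⟫ := real_inner_comm _ _
            _ = ⟪A p, G ψ⟫ := (hsym p (G ψ)).symm
        have hb := hAbound p (G ψ) hpz hψ
        rw [← hp2] at hb
        nlinarith
  refine ⟨main, fun ψ h0 => ?_⟩
  have := (main ψ).1
  rw [h0] at this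
  have hGz : G ψ = 0 := by
    by_contra hc
    have : 0 < ‖G ψ‖ := norm_pos_iff.mpr hc
    nlinarith
  exact hGinj (by rw [hGz, map_zero])
end

section
/- Let V be a finite dimensional subspace of H¹₀(Ω). For f ∈ L²(Ω), let u ∈ H¹₀(Ω) solve −div(a∇u) = f. Then sup_{f ∈ L²(Ω)} inf_{v ∈ V} ‖u − v‖_{a-flux}/‖f‖_{L²} = sup_{w ∈ H²(Ω)∩H¹₀(Ω)} inf_{v ∈ V} ‖(∇w − a∇v)_pot‖_{L²}/‖Δw‖_{L²}. -/
open RealInnerProductSpace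

/-- Lemma `Prop1` of the paper: for a finite dimensional subspace `V` of
`H¹₀(Ω)`, with `u = u(f)` the solution of `-div(a∇u) = f`,
`sup_{f ∈ L²} inf_{v ∈ V} ‖u − v‖_{a-flux}/‖f‖_{L²}
  = sup_{w ∈ H²∩H¹₀} inf_{v ∈ V} ‖(∇w − a∇v)_pot‖_{L²}/‖Δw‖_{L²}`.

Abstract encoding: `L2 = L²(Ω)`, `E = (L²(Ω))^d`, `H = H¹₀(Ω)` with gradient `G` and
embedding `ι` into `L²`; `Kpot = L²_pot(Ω)` is the closure of the range of `G`
(= closure of gradients of `C₀^∞(Ω)` functions); `A` is multiplication by the symmetric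
uniformly elliptic matrix `a(x)`; `sol f` is the weak solution of `-div(a∇(sol f)) = f`;
`W = H²(Ω) ∩ H¹₀(Ω)` with inclusion `j` into `H¹₀` and Laplacian `lap`, satisfying
`∫ ∇w·∇φ = -∫ (Δw)φ` and the `H²` solvability of the Dirichlet–Laplace problem. -/
theorem flux_norm_sup_inf_eq_laplacian_form
    {L2 E H W : Type*}
    [NormedAddCommGroup L2] [InnerProductSpace ℝ L2] [CompleteSpace L2]
    [NormedAddCommGroup E] [InnerProductSpace ℝ E] [CompleteSpace E]
    [AddCommGroup H] [Module ℝ H] [AddCommGroup W] [Module ℝ W]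
    (G : H →ₗ[ℝ] E) (hGinj : Function.Injective G) (ι : H →ₗ[ℝ] L2)
    (Kpot : Submodule ℝ E) [Kpot.HasOrthogonalProjection]
    (hK : Kpot = (LinearMap.range G).topologicalClosure)
    (A : E →ₗ[ℝ] E) (lmin lmax : ℝ) (hlmin : 0 < lmin)
    (hsym : ∀ ξ η : E, ⟪A ξ, η⟫ = ⟪ξ, A η⟫)
    (hell₁ : ∀ ξ : E, lmin * ‖ξ‖ ^ 2 ≤ ⟪ξ, A ξ⟫)
    (hell₂ : ∀ ξ : E, ⟪ξ, A ξ⟫ ≤ lmax * ‖ξ‖ ^ 2)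
    (sol : L2 → H)
    (hsol : ∀ (f : L2) (φ : H), ⟪A (G (sol f)), G φ⟫ = ⟪f, ι φ⟫)
    (j : W →ₗ[ℝ] H) (lap : W →ₗ[ℝ] L2)
    (hlap : ∀ (w : W) (φ : H), ⟪G (j w), G φ⟫ = -⟪lap w, ι φ⟫)
    (hreg : ∀ f : L2, ∃ w : W, lap w = -f)
    (V : Submodule ℝ H) (hV : FiniteDimensional ℝ V) :
    (⨆ f : L2, ⨅ v : V,
        ‖(Submodule.orthogonalProjectionOnto Kpot (A (G (sol f - (v : H)))) : E)‖ / ‖f‖)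
      = ⨆ w : W, ⨅ v : V,
          ‖(Submodule.orthogonalProjectionOnto Kpot (G (j w) - A (G (v : H))) : E)‖ / ‖lap w‖ := by
  -- orthogonal complement of Kpot is the orthogonal complement of range G
  have horth : Kpotᗮ = (LinearMap.range G)ᗮ := by
    rw [hK, ← Submodule.orthogonal_orthogonal_eq_closure,
      Submodule.triorthogonal_eq_orthogonal]
  -- key: if `lap w = -f` then the two projections agree for every `v`.
  have key : ∀ (w : W) (f : L2), lap w = -f → ∀ v : H,
      (Submodule.orthogonalProjectionOnto Kpot (G (j w) - A (G v)) : E)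
        = (Submodule.orthogonalProjectionOnto Kpot (A (G (sol f - v))) : E) := by
    intro w f hwf v
    have hdmem : G (j w) - A (G (sol f)) ∈ Kpotᗮ := by
      rw [horth, Submodule.mem_orthogonal]
      rintro _ ⟨φ, rfl⟩
      rw [inner_sub_right, real_inner_comm (G (j w)) (G φ), hlap w φ,
        real_inner_comm (A (G (sol f))) (G φ), hsol f φ, hwf, inner_neg_left]
      ring
    have hdiff : (G (j w) - A (G v)) - A (G (sol f - v))
        = G (j w) - A (G (sol f)) := by
      rw [map_sub, map_sub]; abel
    have h0 : Submodule.orthogonalProjectionOnto Kpot ((G (j w) - A (G v)) - A (G (sol f - v))) = 0 := by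
      rw [hdiff]
      exact Submodule.orthogonalProjectionOnto_apply_of_mem_orthogonal hdmem
    have := map_sub (Submodule.orthogonalProjectionOnto Kpot) (G (j w) - A (G v)) (A (G (sol f - v)))
    rw [h0] at this
    have h2 : (Submodule.orthogonalProjectionOnto Kpot (G (j w) - A (G v)))
        = Submodule.orthogonalProjectionOnto Kpot (A (G (sol f - v))) := by
      have := this.symm
      rwa [sub_eq_zero] at this
    exact congrArg Subtype.val h2
  -- the two families have the same range of values
  have hrange : Set.range (fun f : L2 => ⨅ v : V,
        ‖(Submodule.orthogonalProjectionOnto Kpot (A (G (sol f - (v : H)))) : E)‖ / ‖f‖)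
      = Set.range (fun w : W => ⨅ v : V,
        ‖(Submodule.orthogonalProjectionOnto Kpot (G (j w) - A (G (v : H))) : E)‖ / ‖lap w‖) := by
    ext x
    constructor
    · rintro ⟨f, rfl⟩
      obtain ⟨w, hw⟩ := hreg f
      refine ⟨w, ?_⟩
      have hnorm : ‖lap w‖ = ‖f‖ := by rw [hw, norm_neg]
      exact iInf_congr fun v => by rw [key w f hw (v : H), hnorm]
    · rintro ⟨w, rfl⟩
      refine ⟨-(lap w), ?_⟩
      have hw : lap w = -(-(lap w)) := by rw [neg_neg]
      have hnorm : ‖lap w‖ = ‖-(lap w)‖ := by rw [norm_neg]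
      exact (iInf_congr fun v => by rw [key w (-(lap w)) hw (v : H), hnorm]).symm
  exact congrArg sSup hrange
end

section
/- (Transfer property of the flux norm) Let V, V′ be finite-dimensional subspaces of H¹₀(Ω), and a, a′ two symmetric uniformly elliptic L^∞ coefficient matrices. For f ∈ L²(Ω) let u solve −div(a∇u) = f and u′ solve −div(a′∇u′) = f, both with zero Dirichlet boundary conditions. If span{div(a∇v) : v ∈ V} = span{div(a′∇v′) : v′ ∈ V′} (as subspaces of H^{−1}(Ω)), then sup_{f∈L²} inf_{v∈V} ‖u−v‖_{a-flux}/‖f‖_{L²} = sup_{f∈L²} inf_{v∈V′} ‖u′−v‖_{a′-flux}/‖f‖_{L²}. -/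
open RealInnerProductSpace

/-- Transfer property of the flux norm: if `V`, `V'` are finite dimensional
subspaces of `H¹₀(Ω)` and `a`, `a'` two symmetric uniformly elliptic `L^∞` coefficient
matrices such that `span{div(a∇v) : v ∈ V} = span{div(a'∇v') : v' ∈ V'}` in `H⁻¹(Ω)`,
then `sup_{f∈L²} inf_{v∈V} ‖u−v‖_{a-flux}/‖f‖ = sup_{f∈L²} inf_{v∈V'} ‖u'−v‖_{a'-flux}/‖f‖`,
where `u`, `u'` solve `-div(a∇u) = f`, `-div(a'∇u') = f` with zero Dirichlet data.

Abstract encoding: `L2 = L²(Ω)`, `E = (L²(Ω))^d`, `H = H¹₀(Ω)` with gradient `G` and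
embedding `ι`; `Kpot = L²_pot(Ω)`; `A`, `A'` are multiplication by `a`, `a'`; `sol`, `sol'`
the weak solution operators. Since the images `{div(a∇v) : v ∈ V}` of the subspaces
`V`, `V'` under the (linear) maps `v ↦ div(a∇v)` are already linear subspaces of `H⁻¹(Ω)`,
the equality of their spans is expressed as mutual inclusion, the distribution `div(a∇v)`
being encoded by its pairings `φ ↦ -⟪a∇v, ∇φ⟫` against `φ ∈ H¹₀(Ω)`. -/
theorem flux_norm_transfer_property
    {L2 E H : Type*}
    [NormedAddCommGroup L2] [InnerProductSpace ℝ L2] [CompleteSpace L2]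
    [NormedAddCommGroup E] [InnerProductSpace ℝ E] [CompleteSpace E]
    [AddCommGroup H] [Module ℝ H]
    (G : H →ₗ[ℝ] E) (hGinj : Function.Injective G) (ι : H →ₗ[ℝ] L2)
    (Kpot : Submodule ℝ E) [Kpot.HasOrthogonalProjection]
    (hK : Kpot = (LinearMap.range G).topologicalClosure)
    (A A' : E →ₗ[ℝ] E) (lmin lmax : ℝ) (hlmin : 0 < lmin)
    (hsym : ∀ ξ η : E, ⟪A ξ, η⟫ = ⟪ξ, A η⟫)
    (hsym' : ∀ ξ η : E, ⟪A' ξ, η⟫ = ⟪ξ, A' η⟫)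
    (hell₁ : ∀ ξ : E, lmin * ‖ξ‖ ^ 2 ≤ ⟪ξ, A ξ⟫)
    (hell₂ : ∀ ξ : E, ⟪ξ, A ξ⟫ ≤ lmax * ‖ξ‖ ^ 2)
    (hell₁' : ∀ ξ : E, lmin * ‖ξ‖ ^ 2 ≤ ⟪ξ, A' ξ⟫)
    (hell₂' : ∀ ξ : E, ⟪ξ, A' ξ⟫ ≤ lmax * ‖ξ‖ ^ 2)
    (sol sol' : L2 → H)
    (hsol : ∀ (f : L2) (φ : H), ⟪A (G (sol f)), G φ⟫ = ⟪f, ι φ⟫)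
    (hsol' : ∀ (f : L2) (φ : H), ⟪A' (G (sol' f)), G φ⟫ = ⟪f, ι φ⟫)
    (V V' : Submodule ℝ H) (hV : FiniteDimensional ℝ V) (hV' : FiniteDimensional ℝ V')
    (hspan₁ : ∀ v ∈ V, ∃ v' ∈ V', ∀ φ : H, ⟪A (G v), G φ⟫ = ⟪A' (G v'), G φ⟫)
    (hspan₂ : ∀ v' ∈ V', ∃ v ∈ V, ∀ φ : H, ⟪A (G v), G φ⟫ = ⟪A' (G v'), G φ⟫) :
    (⨆ f : L2, ⨅ v : V,
        ‖(Submodule.orthogonalProjectionOnto Kpot (A (G (sol f - (v : H)))) : E)‖ / ‖f‖)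
      = ⨆ f : L2, ⨅ v : V',
          ‖(Submodule.orthogonalProjectionOnto Kpot (A' (G (sol' f - (v : H)))) : E)‖ / ‖f‖ := by
  have hproj : ∀ ξ ξ' : E, (∀ φ : H, ⟪ξ, G φ⟫ = ⟪ξ', G φ⟫) →
      Submodule.orthogonalProjectionOnto Kpot ξ = Submodule.orthogonalProjectionOnto Kpot ξ' := by
    intro ξ ξ' h
    have hmem : ξ - ξ' ∈ Kpotᗮ := by
      rw [Submodule.mem_orthogonal, hK]
      have hle : LinearMap.range G ≤ LinearMap.ker ((innerSL ℝ (ξ - ξ') : E →L[ℝ] ℝ) : E →ₗ[ℝ] ℝ) := by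
        rintro x ⟨φ, rfl⟩
        simp only [LinearMap.mem_ker, ContinuousLinearMap.coe_coe, innerSL_apply_apply,
          inner_sub_left, h φ, sub_self]
      have hcl : (LinearMap.range G).topologicalClosure ≤
          LinearMap.ker ((innerSL ℝ (ξ - ξ') : E →L[ℝ] ℝ) : E →ₗ[ℝ] ℝ) :=
        Submodule.topologicalClosure_minimal _ hle
          (ContinuousLinearMap.isClosed_ker (innerSL ℝ (ξ - ξ')))
      intro u hu
      have := hcl hu
      simp only [LinearMap.mem_ker, ContinuousLinearMap.coe_coe, innerSL_apply_apply] at this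
      rw [real_inner_comm]
      exact this
    have h0 : Submodule.orthogonalProjectionOnto Kpot (ξ - ξ') = 0 :=
      Submodule.orthogonalProjectionOnto_apply_of_mem_orthogonal hmem
    have := map_sub (Submodule.orthogonalProjectionOnto Kpot) ξ ξ'
    rw [h0] at this
    exact (sub_eq_zero.mp this.symm)
  refine iSup_congr fun f => ?_
  have key : ∀ v : V, ∃ v' : V',
      ‖(Submodule.orthogonalProjectionOnto Kpot (A (G (sol f - (v : H)))) : E)‖
        = ‖(Submodule.orthogonalProjectionOnto Kpot (A' (G (sol' f - (v' : H)))) : E)‖ := by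
    rintro ⟨v, hv⟩
    obtain ⟨v', hv', heq⟩ := hspan₁ v hv
    refine ⟨⟨v', hv'⟩, ?_⟩
    congr 1
    refine congrArg _ (hproj _ _ fun φ => ?_)
    simp only [map_sub, inner_sub_left, hsol f φ, hsol' f φ, heq φ]
  have key' : ∀ v' : V', ∃ v : V,
      ‖(Submodule.orthogonalProjectionOnto Kpot (A (G (sol f - (v : H)))) : E)‖
        = ‖(Submodule.orthogonalProjectionOnto Kpot (A' (G (sol' f - (v' : H)))) : E)‖ := by
    rintro ⟨v', hv'⟩
    obtain ⟨v, hv, heq⟩ := hspan₂ v' hv'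
    refine ⟨⟨v, hv⟩, ?_⟩
    congr 1
    refine congrArg _ (hproj _ _ fun φ => ?_)
    simp only [map_sub, inner_sub_left, hsol f φ, hsol' f φ, heq φ]
  refine le_antisymm ?_ ?_
  · refine le_ciInf fun v' => ?_
    obtain ⟨v, hvv⟩ := key' v'
    rw [← hvv]
    exact ciInf_le ⟨0, by rintro x ⟨y, rfl⟩; positivity⟩ v
  · refine le_ciInf fun v => ?_
    obtain ⟨v', hvv⟩ := key v
    rw [hvv]
    exact ciInf_le ⟨0, by rintro x ⟨y, rfl⟩; positivity⟩ v'
end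

section
/- (Pointwise transfer property) Let V, V′ be finite-dimensional subspaces of H¹₀(Ω) with span{div(a∇v) : v ∈ V} = span{div(a′∇v′) : v′ ∈ V′}. For a fixed f ∈ L²(Ω), let u and u′ solve −div(a∇u) = f and −div(a′∇u′) = f respectively with zero Dirichlet conditions. Then inf_{v∈V} ‖u − v‖_{a-flux} = inf_{v∈V′} ‖u′ − v‖_{a′-flux}. This follows from the identity ‖u − v‖_{a-flux} = ‖∇Δ^{−1}(f + div(a∇v))‖_{L²}. -/
open RealInnerProductSpace

/-- Pointwise transfer property: in the setting of the transfer property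
(`span{div(a∇v) : v ∈ V} = span{div(a'∇v') : v' ∈ V'}`), for a fixed `f ∈ L²(Ω)`,
`inf_{v∈V} ‖u − v‖_{a-flux} = inf_{v∈V'} ‖u' − v‖_{a'-flux}`, where `u`, `u'` solve
`-div(a∇u) = f = -div(a'∇u')` with zero Dirichlet data; moreover
`‖u − v‖_{a-flux} = ‖∇Δ⁻¹(f + div(a∇v))‖_{L²}`, where `∇Δ⁻¹(f + div(a∇v))` is the
potential field `ξ ∈ L²_pot(Ω)` with `-div ξ = f + div(a∇v)` weakly, i.e.
`⟪ξ, ∇φ⟫ = ⟪f, φ⟫ − ⟪a∇v, ∇φ⟫` for all `φ ∈ H¹₀(Ω)`.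

Abstract encoding as in the transfer property: `L2 = L²(Ω)`, `E = (L²(Ω))^d`,
`H = H¹₀(Ω)`, gradient `G`, embedding `ι`, `Kpot = L²_pot(Ω)` the closure of the range
of `G`, `A`, `A'` multiplication by `a`, `a'`, and `sol`, `sol'` the weak solution
operators. -/
theorem flux_norm_pointwise_transfer
    {L2 E H : Type*}
    [NormedAddCommGroup L2] [InnerProductSpace ℝ L2] [CompleteSpace L2]
    [NormedAddCommGroup E] [InnerProductSpace ℝ E] [CompleteSpace E]
    [AddCommGroup H] [Module ℝ H]
    (G : H →ₗ[ℝ] E) (hGinj : Function.Injective G) (ι : H →ₗ[ℝ] L2)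
    (Kpot : Submodule ℝ E) [Submodule.HasOrthogonalProjection Kpot]
    (hK : Kpot = (LinearMap.range G).topologicalClosure)
    (A A' : E →ₗ[ℝ] E) (lmin lmax : ℝ) (hlmin : 0 < lmin)
    (hsym : ∀ ξ η : E, ⟪A ξ, η⟫ = ⟪ξ, A η⟫)
    (hsym' : ∀ ξ η : E, ⟪A' ξ, η⟫ = ⟪ξ, A' η⟫)
    (hell₁ : ∀ ξ : E, lmin * ‖ξ‖ ^ 2 ≤ ⟪ξ, A ξ⟫)
    (hell₂ : ∀ ξ : E, ⟪ξ, A ξ⟫ ≤ lmax * ‖ξ‖ ^ 2)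
    (hell₁' : ∀ ξ : E, lmin * ‖ξ‖ ^ 2 ≤ ⟪ξ, A' ξ⟫)
    (hell₂' : ∀ ξ : E, ⟪ξ, A' ξ⟫ ≤ lmax * ‖ξ‖ ^ 2)
    (sol sol' : L2 → H)
    (hsol : ∀ (f : L2) (φ : H), ⟪A (G (sol f)), G φ⟫ = ⟪f, ι φ⟫)
    (hsol' : ∀ (f : L2) (φ : H), ⟪A' (G (sol' f)), G φ⟫ = ⟪f, ι φ⟫)
    (V V' : Submodule ℝ H) (hV : FiniteDimensional ℝ V) (hV' : FiniteDimensional ℝ V')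
    (hspan₁ : ∀ v ∈ V, ∃ v' ∈ V', ∀ φ : H, ⟪A (G v), G φ⟫ = ⟪A' (G v'), G φ⟫)
    (hspan₂ : ∀ v' ∈ V', ∃ v ∈ V, ∀ φ : H, ⟪A (G v), G φ⟫ = ⟪A' (G v'), G φ⟫)
    (f : L2) :
    (⨅ v : V, ‖(Submodule.orthogonalProjectionOnto Kpot (A (G (sol f - (v : H)))) : E)‖)
      = (⨅ v : V', ‖(Submodule.orthogonalProjectionOnto Kpot (A' (G (sol' f - (v : H)))) : E)‖) ∧
    ∀ (v : H) (ξ : E), ξ ∈ Kpot →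
      (∀ φ : H, ⟪ξ, G φ⟫ = ⟪f, ι φ⟫ - ⟪A (G v), G φ⟫) →
      ‖(Submodule.orthogonalProjectionOnto Kpot (A (G (sol f - v))) : E)‖ = ‖ξ‖ := by
  -- G φ lies in Kpot
  have hGmem : ∀ φ : H, G φ ∈ Kpot := by
    intro φ
    rw [hK]
    exact Submodule.le_topologicalClosure _ ⟨φ, rfl⟩
  -- two elements of Kpot with the same inner products against all G φ coincide
  have key : ∀ x ∈ Kpot, ∀ y ∈ Kpot, (∀ φ : H, ⟪x, G φ⟫ = ⟪y, G φ⟫) → x = y := by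
    intro x hx y hy h
    have hxy : x - y ∈ Kpot := Kpot.sub_mem hx hy
    rw [hK] at hxy
    have hcl : x - y ∈ closure ((LinearMap.range G : Submodule ℝ E) : Set E) := hxy
    have hzero : ∀ z ∈ closure ((LinearMap.range G : Submodule ℝ E) : Set E),
        ⟪x - y, z⟫ = 0 := by
      intro z hz
      have hclosed : IsClosed {z : E | ⟪x - y, z⟫ = 0} :=
        isClosed_eq (innerSL ℝ (x - y)).continuous continuous_const
      refine hclosed.closure_subset_iff.2 ?_ hz
      rintro _ ⟨φ, rfl⟩
      simp [inner_sub_left, h φ]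
    have : ⟪x - y, x - y⟫ = 0 := hzero _ hcl
    have := inner_self_eq_zero.mp this
    exact sub_eq_zero.mp this
  -- projection characterization
  have hproj : ∀ (a : E) (φ : H),
      ⟪(Submodule.orthogonalProjectionOnto Kpot a : E), G φ⟫ = ⟪a, G φ⟫ := by
    intro a φ
    have h0 : ⟪a - (Submodule.orthogonalProjectionOnto Kpot a : E), G φ⟫ = 0 :=
      Submodule.starProjection_inner_eq_zero a (G φ) (hGmem φ)
    have := inner_sub_left (𝕜 := ℝ) a (Submodule.orthogonalProjectionOnto Kpot a : E) (G φ)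
    rw [h0] at this
    linarith
  -- weak form of the projected flux
  have hweak : ∀ v : H, ∀ φ : H,
      ⟪(Submodule.orthogonalProjectionOnto Kpot (A (G (sol f - v))) : E), G φ⟫
        = ⟪f, ι φ⟫ - ⟪A (G v), G φ⟫ := by
    intro v φ
    rw [hproj]
    have : A (G (sol f - v)) = A (G (sol f)) - A (G v) := by
      rw [map_sub, map_sub]
    rw [this, inner_sub_left, hsol f φ]
  have hweak' : ∀ v : H, ∀ φ : H,
      ⟪(Submodule.orthogonalProjectionOnto Kpot (A' (G (sol' f - v))) : E), G φ⟫
        = ⟪f, ι φ⟫ - ⟪A' (G v), G φ⟫ := by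
    intro v φ
    rw [hproj]
    have : A' (G (sol' f - v)) = A' (G (sol' f)) - A' (G v) := by
      rw [map_sub, map_sub]
    rw [this, inner_sub_left, hsol' f φ]
  -- matched pairs give equal projections
  have hmatch : ∀ v v' : H, (∀ φ : H, ⟪A (G v), G φ⟫ = ⟪A' (G v'), G φ⟫) →
      (Submodule.orthogonalProjectionOnto Kpot (A (G (sol f - v))) : E)
        = (Submodule.orthogonalProjectionOnto Kpot (A' (G (sol' f - v'))) : E) := by
    intro v v' h
    refine key _ (Submodule.orthogonalProjectionOnto Kpot _).2 _ (Submodule.orthogonalProjectionOnto Kpot _).2 ?_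
    intro φ
    rw [hweak v φ, hweak' v' φ, h φ]
  constructor
  · -- infimum transfer
    have hbdd : BddBelow (Set.range fun v : V' =>
        ‖(Submodule.orthogonalProjectionOnto Kpot (A' (G (sol' f - (v : H)))) : E)‖) := by
      refine ⟨0, ?_⟩
      rintro _ ⟨v, rfl⟩
      exact norm_nonneg _
    have hbdd' : BddBelow (Set.range fun v : V =>
        ‖(Submodule.orthogonalProjectionOnto Kpot (A (G (sol f - (v : H)))) : E)‖) := by
      refine ⟨0, ?_⟩
      rintro _ ⟨v, rfl⟩
      exact norm_nonneg _
    refine le_antisymm ?_ ?_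
    · refine le_ciInf fun v' => ?_
      obtain ⟨v, hvV, hvv⟩ := hspan₂ v' v'.2
      have := ciInf_le hbdd' (⟨v, hvV⟩ : V)
      rwa [show (Submodule.orthogonalProjectionOnto Kpot (A (G (sol f - v))) : E)
          = (Submodule.orthogonalProjectionOnto Kpot (A' (G (sol' f - (v' : H)))) : E) from
        hmatch v v' hvv] at this
    · refine le_ciInf fun v => ?_
      obtain ⟨v', hvV', hvv⟩ := hspan₁ v v.2
      have := ciInf_le hbdd (⟨v', hvV'⟩ : V')
      rwa [show (Submodule.orthogonalProjectionOnto Kpot (A' (G (sol' f - v'))) : E)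
          = (Submodule.orthogonalProjectionOnto Kpot (A (G (sol f - (v : H)))) : E) from
        (hmatch v v' hvv).symm] at this
  · -- pointwise identity
    intro v ξ hξ hξweak
    have : (Submodule.orthogonalProjectionOnto Kpot (A (G (sol f - v))) : E) = ξ := by
      refine key _ (Submodule.orthogonalProjectionOnto Kpot _).2 _ hξ ?_
      intro φ
      rw [hweak v φ, hξweak φ]
    rw [this]
end

section
/- For a finite dimensional subspace V of H¹₀(Ω), define (div a∇V)^⊥ := {z ∈ H¹₀(Ω) : (∇z, a∇v)_{L²} = 0 for all v ∈ V}. For f ∈ L²(Ω) let u solve −div(a∇u) = f with zero Dirichlet data. Then sup_{f∈L²(Ω)} inf_{v∈V} ‖u−v‖_{a-flux}/‖f‖_{L²} = sup_{z ∈ (div a∇V)^⊥} ‖z‖_{L²}/‖∇z‖_{L²}. -/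
open RealInnerProductSpace Filter

lemma iSup_eq_iSup_aux {α β : Type*} [Nonempty α] [Nonempty β] (s : α → ℝ) (t : β → ℝ)
    (h1 : ∀ b, ∃ a, t b ≤ s a)
    (h2 : BddAbove (Set.range t) → ∀ a, s a ≤ ⨆ b, t b) :
    (⨆ a, s a) = ⨆ b, t b := by
  by_cases hb : BddAbove (Set.range t)
  · have hs : ∀ a, s a ≤ ⨆ b, t b := h2 hb
    have hbs : BddAbove (Set.range s) := ⟨⨆ b, t b, by rintro x ⟨a, rfl⟩; exact hs a⟩
    apply le_antisymm (ciSup_le hs)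
    refine ciSup_le fun b => ?_
    obtain ⟨a, ha⟩ := h1 b
    exact ha.trans (le_ciSup hbs a)
  · have hbs : ¬ BddAbove (Set.range s) := by
      rintro ⟨M, hM⟩
      apply hb
      refine ⟨M, ?_⟩
      rintro x ⟨b, rfl⟩
      obtain ⟨a, ha⟩ := h1 b
      exact ha.trans (hM ⟨a, rfl⟩)
    rw [Real.iSup_of_not_bddAbove hbs, Real.iSup_of_not_bddAbove hb]

lemma tendsto_zero_of_inner_elliptic {E : Type*} [NormedAddCommGroup E]
    [InnerProductSpace ℝ E]
    (A : E →ₗ[ℝ] E) (lmin : ℝ) (hlmin : 0 < lmin)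
    (hell₁ : ∀ ξ : E, lmin * ‖ξ‖ ^ 2 ≤ ⟪ξ, A ξ⟫)
    (V' : Submodule ℝ E) (hV' : FiniteDimensional ℝ V')
    (q : ℕ → V')
    (hq : ∀ w : V', Tendsto (fun n => ⟪((q n) : E), A (w : E)⟫) atTop (nhds 0)) :
    Tendsto (fun n => ((q n) : E)) atTop (nhds 0) := by
  classical
  -- the linear map sending x ∈ V' to the functional w ↦ ⟪x, A w⟫ on V'
  let Θ : V' →ₗ[ℝ] Module.Dual ℝ V' :=
    { toFun := fun x =>
        { toFun := fun w => ⟪(x : E), A (w : E)⟫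
          map_add' := by intro w₁ w₂; simp [inner_add_right]
          map_smul' := by intro c w; simp [inner_smul_right] }
      map_add' := by intro x y; ext w; simp [inner_add_left]
      map_smul' := by intro c x; ext w; simp [inner_smul_left] }
  have hΘinj : Function.Injective Θ := by
    rw [injective_iff_map_eq_zero]
    intro x hx
    have h1 : ⟪(x : E), A (x : E)⟫ = 0 := congrArg (fun g => g x) hx
    have h2 := hell₁ (x : E)
    have h3 : ‖(x : E)‖ = 0 := by
      by_contra hne
      have hpos : 0 < ‖(x : E)‖ := lt_of_le_of_ne (norm_nonneg _) (Ne.symm hne)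
      have hq2 : 0 < lmin * ‖(x : E)‖ ^ 2 := by positivity
      linarith
    ext
    simpa using norm_eq_zero.mp h3
  -- transfer to coordinates with respect to a finite basis
  obtain ⟨m, b⟩ : ∃ m : ℕ, Nonempty (Module.Basis (Fin m) ℝ V') := by
    haveI := hV'
    exact ⟨Module.finrank ℝ V', ⟨Module.finBasis ℝ V'⟩⟩
  obtain ⟨b⟩ := b
  let Θ' : V' →ₗ[ℝ] (Fin m → ℝ) :=
    { toFun := fun x => fun i => (Θ x) (b i)
      map_add' := by intro x y; funext i; simp
      map_smul' := by intro c x; funext i; simp }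
  have hΘ'inj : Function.Injective Θ' := by
    rw [injective_iff_map_eq_zero]
    intro x hx
    have hbasis : ∀ i, (Θ x) (b i) = 0 := fun i => congrFun hx i
    have hzero : Θ x = 0 := by
      apply b.ext
      intro i
      simpa using hbasis i
    exact hΘinj (by simpa using hzero)
  let e : V' ≃ₗ[ℝ] LinearMap.range Θ' := LinearEquiv.ofInjective Θ' hΘ'inj
  haveI := hV'
  have hcont : Continuous (e.symm : LinearMap.range Θ' →ₗ[ℝ] V') :=
    LinearMap.continuous_of_finiteDimensional _
  -- Θ' (q n) → 0
  have hΘq : Tendsto (fun n => Θ' (q n)) atTop (nhds 0) := by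
    rw [tendsto_pi_nhds]
    intro i
    exact hq (b i)
  have hr : Tendsto (fun n => e (q n)) atTop (nhds 0) := by
    rw [tendsto_subtype_rng]
    simpa [e, LinearEquiv.ofInjective_apply] using hΘq
  have hq0 : Tendsto q atTop (nhds 0) := by
    have h2 := (hcont.tendsto 0).comp hr
    have h0 : (e.symm : LinearMap.range Θ' →ₗ[ℝ] V') (0 : LinearMap.range Θ') = 0 :=
      map_zero _
    rw [h0] at h2
    have heq : (fun n => (e.symm : LinearMap.range Θ' →ₗ[ℝ] V') (e (q n))) = q :=
      funext fun n => e.symm_apply_apply (q n)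
    exact Filter.Tendsto.congr (fun n => e.symm_apply_apply (q n)) h2
  have := (continuous_subtype_val.tendsto (0 : V')).comp hq0
  simpa [Function.comp_def] using this

/-- Proposition `Csorsedfesol4` of the paper: for a finite dimensional
subspace `V` of `H¹₀(Ω)`, with `(div a∇V)^⊥ := {z ∈ H¹₀(Ω) : (∇z, a∇v)_{L²} = 0 ∀ v ∈ V}`
and `u = u(f)` the solution of `-div(a∇u) = f`,
`sup_{f∈L²} inf_{v∈V} ‖u−v‖_{a-flux}/‖f‖_{L²}
  = sup_{z ∈ (div a∇V)^⊥} ‖z‖_{L²}/‖∇z‖_{L²}`.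

Abstract encoding: `L2 = L²(Ω)`, `E = (L²(Ω))^d`, `H = H¹₀(Ω)` with gradient `G` and
embedding `ι` into `L²`; `Kpot = L²_pot(Ω)` is the closure of the range of `G`; `A` is
multiplication by the symmetric uniformly elliptic matrix `a(x)`; `sol` is the weak
solution operator of `-div(a∇·) = ·`. -/
theorem flux_norm_sup_inf_eq_poincare_constant
    {L2 E H : Type*}
    [NormedAddCommGroup L2] [InnerProductSpace ℝ L2] [CompleteSpace L2]
    [NormedAddCommGroup E] [InnerProductSpace ℝ E] [CompleteSpace E]
    [AddCommGroup H] [Module ℝ H]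
    (G : H →ₗ[ℝ] E) (hGinj : Function.Injective G) (ι : H →ₗ[ℝ] L2)
    (Kpot : Submodule ℝ E) [Submodule.HasOrthogonalProjection Kpot]
    (hK : Kpot = (LinearMap.range G).topologicalClosure)
    (A : E →ₗ[ℝ] E) (lmin lmax : ℝ) (hlmin : 0 < lmin)
    (hsym : ∀ ξ η : E, ⟪A ξ, η⟫ = ⟪ξ, A η⟫)
    (hell₁ : ∀ ξ : E, lmin * ‖ξ‖ ^ 2 ≤ ⟪ξ, A ξ⟫)
    (hell₂ : ∀ ξ : E, ⟪ξ, A ξ⟫ ≤ lmax * ‖ξ‖ ^ 2)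
    (sol : L2 → H)
    (hsol : ∀ (f : L2) (φ : H), ⟪A (G (sol f)), G φ⟫ = ⟪f, ι φ⟫)
    (V : Submodule ℝ H) (hV : FiniteDimensional ℝ V) :
    (⨆ f : L2, ⨅ v : V,
        ‖(Submodule.orthogonalProjectionOnto Kpot (A (G (sol f - (v : H)))) : E)‖ / ‖f‖)
      = ⨆ z : {z : H // ∀ v ∈ V, ⟪G z, A (G v)⟫ = 0}, ‖ι (z : H)‖ / ‖G (z : H)‖ := by
  classical
  haveI : Nonempty L2 := ⟨0⟩
  haveI : Nonempty V := ⟨0⟩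
  haveI : Nonempty {z : H // ∀ v ∈ V, ⟪G z, A (G v)⟫ = 0} :=
    ⟨⟨0, fun v _ => by simp⟩⟩
  haveI := hV
  -- the flux map
  set T : H →ₗ[ℝ] E :=
    ((Kpot.subtype.comp (Submodule.orthogonalProjectionOnto Kpot).toLinearMap).comp (A.comp G)) with hTdef
  have hTapp : ∀ h : H, ((Submodule.orthogonalProjectionOnto Kpot (A (G h)) : E)) = T h := fun h => rfl
  have hGK : ∀ h : H, G h ∈ Kpot := by
    intro h
    rw [hK]
    exact Submodule.le_topologicalClosure _ ⟨h, rfl⟩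
  have hPK : ∀ (x y : E), y ∈ Kpot → ⟪((Submodule.orthogonalProjectionOnto Kpot x : E)), y⟫ = ⟪x, y⟫ := by
    intro x y hy
    have h0 : ⟪x - (Submodule.orthogonalProjectionOnto Kpot x : E), y⟫ = 0 :=
        Submodule.starProjection_inner_eq_zero (K := Kpot) x y hy
    rw [inner_sub_left] at h0
    linarith
  have hTG : ∀ h φ : H, ⟪T h, G φ⟫ = ⟪A (G h), G φ⟫ := fun h φ => hPK _ _ (hGK φ)
  have hTK : ∀ h : H, T h ∈ Kpot := fun h => (Submodule.orthogonalProjectionOnto Kpot (A (G h))).2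
  have hGz : ∀ z : H, G z = 0 → z = 0 := fun z hz => hGinj (by rw [hz, map_zero])
  -- `a`-orthogonal projection onto `V`
  have hproj : ∀ h : H, ∃ p : V, ∀ v ∈ V, ⟪G h - G (p : H), A (G v)⟫ = 0 := by
    let Φ : V →ₗ[ℝ] Module.Dual ℝ V :=
      { toFun := fun p =>
          { toFun := fun v => ⟪G (p : H), A (G (v : H))⟫
            map_add' := by intro v w; simp [inner_add_right]
            map_smul' := by intro c v; simp [inner_smul_right] }
        map_add' := by intro p q; ext v; simp [inner_add_left]
        map_smul' := by intro c p; ext v; simp [inner_smul_left] }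
    have hΦinj : Function.Injective Φ := by
      rw [injective_iff_map_eq_zero]
      intro p hp
      have h1 : ⟪G (p : H), A (G (p : H))⟫ = 0 := congrArg (fun g => g p) hp
      have h2 := hell₁ (G (p : H))
      have h3 : ‖G (p : H)‖ = 0 := by
        by_contra hne
        have hpos : 0 < ‖G (p : H)‖ := lt_of_le_of_ne (norm_nonneg _) (Ne.symm hne)
        have : 0 < lmin * ‖G (p : H)‖ ^ 2 := by positivity
        linarith
      exact Subtype.ext (hGz _ (norm_eq_zero.mp h3))
    have hΦsurj : Function.Surjective Φ :=
      (LinearMap.injective_iff_surjective_of_finrank_eq_finrank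
        (Subspace.dual_finrank_eq).symm).mp hΦinj
    intro h
    obtain ⟨p, hp⟩ := hΦsurj
      { toFun := fun v => ⟪G h, A (G (v : H))⟫
        map_add' := by intro v w; simp [inner_add_right]
        map_smul' := by intro c v; simp [inner_smul_right] }
    refine ⟨p, fun v hv => ?_⟩
    have h5 : ⟪G (p : H), A (G v)⟫ = ⟪G h, A (G v)⟫ := DFunLike.congr_fun hp ⟨v, hv⟩
    rw [inner_sub_left, h5, sub_self]
  refine iSup_eq_iSup_aux _ _ ?_ ?_
  · -- every ratio on the right is dominated by a ratio on the left
    rintro ⟨z, hz⟩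
    by_cases hι : ι z = 0
    · refine ⟨0, ?_⟩
      have h0 : (⨅ v : V,
          ‖(Submodule.orthogonalProjectionOnto Kpot (A (G (sol 0 - (v : H)))) : E)‖ / ‖(0 : L2)‖) = 0 := by
        rw [norm_zero]
        simp only [div_zero]
        exact ciInf_const
      rw [h0, hι]
      simp
    · have hzne : z ≠ 0 := fun h => hι (by rw [h, map_zero])
      have hGzne : G z ≠ 0 := fun h => hzne (hGz _ h)
      have hGpos : 0 < ‖G z‖ := norm_pos_iff.mpr hGzne
      have hιpos : 0 < ‖ι z‖ := norm_pos_iff.mpr hι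
      refine ⟨ι z, le_ciInf fun v => ?_⟩
      rw [hTapp]
      have h1 : ⟪T (sol (ι z) - (v : H)), G z⟫ = ‖ι z‖ ^ 2 := by
        rw [hTG, map_sub, map_sub, inner_sub_left, hsol (ι z) z]
        have h2 : ⟪G z, A (G (v : H))⟫ = 0 := hz v v.2
        have h2' : ⟪A (G (v : H)), G z⟫ = 0 := by rw [real_inner_comm]; exact h2
        rw [h2', sub_zero, real_inner_self_eq_norm_sq]
      have key : ‖ι z‖ ^ 2 ≤ ‖T (sol (ι z) - (v : H))‖ * ‖G z‖ := by
        rw [← h1]; exact real_inner_le_norm _ _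
      rw [div_le_div_iff₀ hGpos hιpos, ← pow_two]
      exact key
  · -- the left-hand ratios are bounded by the right-hand supremum
    intro hbdd f
    set C := ⨆ z : {z : H // ∀ v ∈ V, ⟪G z, A (G v)⟫ = 0}, ‖ι (z : H)‖ / ‖G (z : H)‖ with hC
    have hC0 : 0 ≤ C := by
      have := le_ciSup hbdd (⟨0, fun v _ => by simp⟩ :
        {z : H // ∀ v ∈ V, ⟪G z, A (G v)⟫ = 0})
      simpa using this
    have hbound : ∀ z : H, (∀ v ∈ V, ⟪G z, A (G v)⟫ = 0) → ‖ι z‖ ≤ C * ‖G z‖ := by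
      intro z hz
      by_cases hGz0 : G z = 0
      · have : z = 0 := hGz _ hGz0
        simp [this]
      · have hpos : 0 < ‖G z‖ := norm_pos_iff.mpr hGz0
        have h1 : ‖ι z‖ / ‖G z‖ ≤ C := le_ciSup hbdd ⟨z, hz⟩
        calc ‖ι z‖ = (‖ι z‖ / ‖G z‖) * ‖G z‖ := by field_simp
        _ ≤ C * ‖G z‖ := mul_le_mul_of_nonneg_right h1 hpos.le
    by_cases hf : f = 0
    · subst hf
      rw [norm_zero]
      simp only [div_zero]
      rw [ciInf_const]
      exact hC0
    have hfpos : 0 < ‖f‖ := norm_pos_iff.mpr hf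
    set u := sol f with hu
    haveI : Module.Finite ℝ (V.map T) := Module.Finite.map V T
    haveI : CompleteSpace (V.map T) := FiniteDimensional.complete ℝ _
    set w₀ := Submodule.orthogonalProjectionOnto (V.map T) (T u) with hw₀
    obtain ⟨v₀, hv₀V, hv₀⟩ := Submodule.mem_map.mp w₀.2
    set Q : E := T u - (w₀ : E) with hQdef
    have hQW : ∀ w ∈ V.map T, ⟪Q, w⟫ = 0 := by
      intro w hw
      have hmem : T u - (w₀ : E) ∈ (V.map T)ᗮ :=
          Submodule.sub_starProjection_mem_orthogonal (K := V.map T) (T u)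
      exact (Submodule.mem_orthogonal' _ _).mp hmem w hw
    have hstep1 : (⨅ v : V,
        ‖(Submodule.orthogonalProjectionOnto Kpot (A (G (sol f - (v : H)))) : E)‖ / ‖f‖) ≤ ‖Q‖ / ‖f‖ := by
      have hbdd0 : BddBelow (Set.range fun v : V =>
          ‖(Submodule.orthogonalProjectionOnto Kpot (A (G (sol f - (v : H)))) : E)‖ / ‖f‖) :=
        ⟨0, by rintro x ⟨v, rfl⟩; positivity⟩
      have hle := ciInf_le hbdd0 (⟨v₀, hv₀V⟩ : V)
      refine hle.trans_eq ?_
      rw [hTapp]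
      congr 1
      rw [hQdef, ← hu, map_sub, hv₀]
    have hstep2 : ‖Q‖ ≤ C * ‖f‖ := by
      by_cases hQ0 : Q = 0
      · rw [hQ0, norm_zero]; positivity
      have hQpos : 0 < ‖Q‖ := norm_pos_iff.mpr hQ0
      have hQK : Q ∈ Kpot := Submodule.sub_mem _ (hTK u) (by rw [← hv₀]; exact hTK v₀)
      have hQcl : Q ∈ closure ((LinearMap.range G : Submodule ℝ E) : Set E) := by
        rw [hK] at hQK
        rwa [← Submodule.topologicalClosure_coe]
      obtain ⟨x, hxmem, hxlim⟩ := mem_closure_iff_seq_limit.mp hQcl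
      choose h hxG using hxmem
      choose p hp using fun n => hproj (h n)
      set zfun : ℕ → H := fun n => h n - ((p n : H)) with hzfun
      have hzZ : ∀ n, ∀ v ∈ V, ⟪G (zfun n), A (G v)⟫ = 0 := by
        intro n v hv
        show ⟪G (h n - (p n : H)), A (G v)⟫ = 0
        rw [map_sub]
        exact hp n v hv
      haveI : Module.Finite ℝ (V.map G) := Module.Finite.map V G
      -- G (p n) → 0
      have hGp : Filter.Tendsto (fun n => G ((p n : H))) Filter.atTop (nhds 0) := by
        have hmain := tendsto_zero_of_inner_elliptic A lmin hlmin hell₁ (V.map G)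
          inferInstance
          (fun n => ⟨G ((p n : H)), Submodule.mem_map_of_mem (p n).2⟩) ?_
        · exact hmain
        · rintro ⟨w, hw⟩
          obtain ⟨v, hvV, rfl⟩ := Submodule.mem_map.mp hw
          have heq : ∀ n, ⟪G ((p n : H)), A (G v)⟫ = ⟪x n, A (G v)⟫ := by
            intro n
            have h6 := hp n v hvV
            rw [inner_sub_left] at h6
            rw [← hxG n]
            linarith
          have hQA : ⟪Q, A (G v)⟫ = 0 := by
            have h7 : ⟪T v, Q⟫ = ⟪A (G v), Q⟫ := hPK _ _ hQK
            have h8 : ⟪Q, T v⟫ = 0 := hQW _ (Submodule.mem_map_of_mem hvV)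
            rw [real_inner_comm] at h8
            rw [real_inner_comm, ← h7, h8]
          have hlim : Filter.Tendsto (fun n => ⟪x n, A (G v)⟫) Filter.atTop
              (nhds ⟪Q, A (G v)⟫) := hxlim.inner tendsto_const_nhds
          rw [hQA] at hlim
          exact Filter.Tendsto.congr (fun n => (heq n).symm) hlim
      have hGz_lim : Filter.Tendsto (fun n => G (zfun n)) Filter.atTop (nhds Q) := by
        have heq : (fun n => G (zfun n)) = fun n => x n - G ((p n : H)) := by
          funext n
          show G (h n - (p n : H)) = x n - G ((p n : H))
          rw [map_sub, hxG]
        rw [heq]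
        simpa using hxlim.sub hGp
      have hinner_lim : Filter.Tendsto (fun n => ⟪Q, G (zfun n)⟫) Filter.atTop
          (nhds (‖Q‖ ^ 2)) := by
        have h10 : Filter.Tendsto (fun n => ⟪Q, G (zfun n)⟫) Filter.atTop
            (nhds ⟪Q, Q⟫) := Filter.Tendsto.inner tendsto_const_nhds hGz_lim
        rwa [real_inner_self_eq_norm_sq] at h10
      have hle : ∀ n, ⟪Q, G (zfun n)⟫ ≤ C * ‖f‖ * ‖G (zfun n)‖ := by
        intro n
        have hw0 : ⟪(w₀ : E), G (zfun n)⟫ = 0 := by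
          rw [← hv₀]
          calc ⟪T v₀, G (zfun n)⟫ = ⟪A (G v₀), G (zfun n)⟫ := hTG _ _
          _ = 0 := by rw [real_inner_comm]; exact hzZ n v₀ hv₀V
        have hTu : ⟪T u, G (zfun n)⟫ = ⟪f, ι (zfun n)⟫ := by
          rw [hTG]; exact hsol f (zfun n)
        have h1 : ⟪Q, G (zfun n)⟫ = ⟪f, ι (zfun n)⟫ := by
          rw [hQdef, inner_sub_left, hTu, hw0, sub_zero]
        rw [h1]
        calc ⟪f, ι (zfun n)⟫ ≤ ‖f‖ * ‖ι (zfun n)‖ := real_inner_le_norm _ _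
        _ ≤ ‖f‖ * (C * ‖G (zfun n)‖) :=
          mul_le_mul_of_nonneg_left (hbound _ (hzZ n)) (norm_nonneg f)
        _ = C * ‖f‖ * ‖G (zfun n)‖ := by ring
      have hfinal : ‖Q‖ ^ 2 ≤ C * ‖f‖ * ‖Q‖ := by
        have hR : Filter.Tendsto (fun n => C * ‖f‖ * ‖G (zfun n)‖) Filter.atTop
            (nhds (C * ‖f‖ * ‖Q‖)) := (hGz_lim.norm).const_mul _
        exact le_of_tendsto_of_tendsto' hinner_lim hR hle
      have h9 : ‖Q‖ * ‖Q‖ ≤ (C * ‖f‖) * ‖Q‖ := by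
        rw [← pow_two]
        linarith [hfinal]
      exact le_of_mul_le_mul_right h9 hQpos
    refine hstep1.trans ?_
    rw [div_le_iff₀ hfpos]
    exact hstep2
end

section
/- Let Ψ_k and λ_k (k ≥ 1, ordered increasingly) be the Dirichlet eigenfunctions and eigenvalues of −Δ on Ω. Then for every N ≥ 1, inf over all N-dimensional subspaces V of H¹₀(Ω) of sup_{f ∈ L²(Ω)} inf_{v∈V} ‖u − v‖_{a-flux}/‖f‖_{L²} equals 1/√(λ_{N+1}), where u is the solution of −div(a∇u) = f with zero Dirichlet conditions. The infimum is achieved by the space spanned by θ_1,…,θ_N where −div(a∇θ_k) = λ_kΨ_k with zero Dirichlet conditions. -/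
open RealInnerProductSpace

set_option maxHeartbeats 1600000

/-- optimality part of Theorem `Corol1`: with `Ψ_k`, `λ_k` the Dirichlet
eigenfunctions/eigenvalues of `-Δ` on `Ω` (ordered increasingly), for every `N ≥ 1` the
infimum over all `N`-dimensional subspaces `V ⊂ H¹₀(Ω)` of
`sup_{f∈L²} inf_{v∈V} ‖u−v‖_{a-flux}/‖f‖_{L²}` equals `1/√λ_{N+1}`, and it is achieved by
`Θ := span{θ_1,…,θ_N}` where `-div(a∇θ_k) = λ_k Ψ_k` with zero Dirichlet data.

Abstract encoding: `L2 = L²(Ω)`, `E = (L²(Ω))^d`, `H = H¹₀(Ω)` (gradient `G`,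
embedding `ι`), `Kpot = L²_pot(Ω)` the closure of the range of `G`; `A` multiplication by
`a`; `sol` the weak solution operator of `-div(a∇·)`; `W = H²(Ω)∩H¹₀(Ω)` with inclusion
`j` and Laplacian `lap`; `Ψ : ℕ → W` (0-indexed: `Ψ k` is the `(k+1)`-th eigenfunction,
so `λ_{N+1} = μ N`) is an orthonormal complete system of Dirichlet eigenfunctions,
`lap (Ψ k) = -μ k • Ψ k`, and `θ_{k+1} = sol (μ k • Ψ k)`. -/
theorem optimal_approximation_space_flux_norm
    {L2 E H W : Type*}
    [NormedAddCommGroup L2] [InnerProductSpace ℝ L2] [CompleteSpace L2]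
    [NormedAddCommGroup E] [InnerProductSpace ℝ E] [CompleteSpace E]
    [AddCommGroup H] [Module ℝ H] [AddCommGroup W] [Module ℝ W]
    (G : H →ₗ[ℝ] E) (hGinj : Function.Injective G) (ι : H →ₗ[ℝ] L2)
    (Kpot : Submodule ℝ E) [Kpot.HasOrthogonalProjection]
    (hK : Kpot = (LinearMap.range G).topologicalClosure)
    (A : E →ₗ[ℝ] E) (lmin lmax : ℝ) (hlmin : 0 < lmin)
    (hsym : ∀ ξ η : E, ⟪A ξ, η⟫ = ⟪ξ, A η⟫)
    (hell₁ : ∀ ξ : E, lmin * ‖ξ‖ ^ 2 ≤ ⟪ξ, A ξ⟫)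
    (hell₂ : ∀ ξ : E, ⟪ξ, A ξ⟫ ≤ lmax * ‖ξ‖ ^ 2)
    (sol : L2 → H)
    (hsol : ∀ (f : L2) (φ : H), ⟪A (G (sol f)), G φ⟫ = ⟪f, ι φ⟫)
    (j : W →ₗ[ℝ] H) (lap : W →ₗ[ℝ] L2)
    (hlap : ∀ (w : W) (φ : H), ⟪G (j w), G φ⟫ = -⟪lap w, ι φ⟫)
    (hreg : ∀ f : L2, ∃ w : W, lap w = -f)
    (Ψ : ℕ → W) (μ : ℕ → ℝ)
    (hμpos : ∀ k, 0 < μ k) (hμmono : Monotone μ)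
    (heig : ∀ k, lap (Ψ k) = -(μ k) • ι (j (Ψ k)))
    (horth : ∀ k l, ⟪ι (j (Ψ k)), ι (j (Ψ l))⟫ = if k = l then 1 else 0)
    (hcomplete :
      (Submodule.span ℝ (Set.range fun k => ι (j (Ψ k)))).topologicalClosure = ⊤)
    (N : ℕ) (hN : 1 ≤ N) :
    (⨅ V : {V : Submodule ℝ H // Module.finrank ℝ V = N},
        ⨆ f : L2, ⨅ v : (V : Submodule ℝ H),
          ‖(Kpot.orthogonalProjectionOnto (A (G (sol f - (v : H)))) : E)‖ / ‖f‖)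
      = 1 / Real.sqrt (μ N) ∧
    (⨆ f : L2,
        ⨅ v : Submodule.span ℝ (Set.range fun k : Fin N => sol ((μ k) • ι (j (Ψ k)))),
          ‖(Kpot.orthogonalProjectionOnto (A (G (sol f - (v : H)))) : E)‖ / ‖f‖)
      = 1 / Real.sqrt (μ N) := by
  classical
  have hμnn : ∀ k, (0:ℝ) ≤ μ k := fun k => (hμpos k).le
  have hsqpos : ∀ k, 0 < Real.sqrt (μ k) := fun k => Real.sqrt_pos.2 (hμpos k)
  have hsqmul : ∀ k, Real.sqrt (μ k) * Real.sqrt (μ k) = μ k :=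
    fun k => Real.mul_self_sqrt (hμnn k)
  have sqle : ∀ x y : ℝ, 0 ≤ y → x ^ 2 ≤ y ^ 2 → x ≤ y := by
    intro x y hy h
    calc x ≤ |x| := le_abs_self x
      _ = Real.sqrt (x ^ 2) := (Real.sqrt_sq_eq_abs x).symm
      _ ≤ Real.sqrt (y ^ 2) := Real.sqrt_le_sqrt h
      _ = y := Real.sqrt_sq hy
  set e : ℕ → L2 := fun k => ι (j (Ψ k)) with he
  have honb : Orthonormal ℝ e := orthonormal_iff_ite.2 horth
  let b : HilbertBasis ℕ ℝ L2 := HilbertBasis.mk honb (le_of_eq hcomplete.symm)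
  have hb : ⇑b = e := HilbertBasis.coe_mk _ _
  have hbk : ∀ k, (b k : L2) = e k := fun k => congrFun hb k
  have hGmem : ∀ φ : H, G φ ∈ Kpot := fun φ =>
    hK ▸ Submodule.le_topologicalClosure _ (LinearMap.mem_range_self G φ)
  have hP : ∀ (z : E) (φ : H), ⟪(Kpot.orthogonalProjectionOnto z : E), G φ⟫ = ⟪z, G φ⟫ := by
    intro z φ
    have h0 : ⟪z - (Kpot.orthogonalProjectionOnto z : E), G φ⟫ = 0 :=
      Submodule.starProjection_inner_eq_zero z (G φ) (hGmem φ)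
    rw [inner_sub_left] at h0
    linarith
  have hTpair : ∀ (f : L2) (φ : H),
      ⟪(Kpot.orthogonalProjectionOnto (A (G (sol f))) : E), G φ⟫ = ⟪f, ι φ⟫ := by
    intro f φ; rw [hP, hsol]
  have hEig : ∀ (k : ℕ) (φ : H), ⟪G (j (Ψ k)), G φ⟫ = μ k * ⟪e k, ι φ⟫ := by
    intro k φ
    rw [hlap (Ψ k) φ, heig k, real_inner_smul_left]
    ring
  have hGG : ∀ k l, ⟪G (j (Ψ k)), G (j (Ψ l))⟫ = if k = l then μ k else 0 := by
    intro k l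
    rw [hEig k (j (Ψ l))]
    have h2 : ⟪e k, ι (j (Ψ l))⟫ = if k = l then 1 else 0 := horth k l
    rw [h2]
    split_ifs <;> ring
  set g : ℕ → E := fun k => (Real.sqrt (μ k))⁻¹ • G (j (Ψ k)) with hgdef
  have hong : Orthonormal ℝ g := by
    apply orthonormal_iff_ite.2
    intro k l
    have h1 : ⟪g k, g l⟫
        = (Real.sqrt (μ k))⁻¹ * ((Real.sqrt (μ l))⁻¹ * ⟪G (j (Ψ k)), G (j (Ψ l))⟫) := by
      rw [hgdef]
      rw [real_inner_smul_left, real_inner_smul_right]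
    rw [h1, hGG]
    split_ifs with h
    · subst h
      set sk := Real.sqrt (μ k) with hsk
      have hs : sk * sk = μ k := hsqmul k
      have hskne : sk ≠ 0 := (hsqpos k).ne'
      rw [← hs]
      field_simp
    · ring
  -- uniqueness of weak solutions and linearity of `sol`
  have huniq : ∀ h : H, (∀ φ : H, ⟪A (G h), G φ⟫ = 0) → h = 0 := by
    intro h hh
    have h1 := hell₁ (G h)
    rw [real_inner_comm (A (G h)) (G h), hh h] at h1
    have h2 : ‖G h‖ ^ 2 = 0 := le_antisymm (by nlinarith) (sq_nonneg _)
    have h3 : G h = G 0 := by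
      rw [map_zero]
      exact norm_eq_zero.1 (pow_eq_zero_iff two_ne_zero |>.1 h2)
    exact hGinj h3
  have hsoladd : ∀ f₁ f₂ : L2, sol (f₁ + f₂) = sol f₁ + sol f₂ := by
    intro f₁ f₂
    have h0 : sol (f₁ + f₂) - (sol f₁ + sol f₂) = 0 := by
      apply huniq
      intro φ
      rw [map_sub, map_add, map_sub, map_add, inner_sub_left, inner_add_left,
        hsol, hsol, hsol, inner_add_left]
      ring
    rw [sub_eq_zero] at h0; exact h0
  have hsolsmul : ∀ (c : ℝ) (f : L2), sol (c • f) = c • sol f := by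
    intro c f
    have h0 : sol (c • f) - c • sol f = 0 := by
      apply huniq
      intro φ
      rw [map_sub, map_smul, map_sub, map_smul, inner_sub_left,
        real_inner_smul_left, hsol, hsol, real_inner_smul_left]
      ring
    rw [sub_eq_zero] at h0; exact h0
  let solL : L2 →ₗ[ℝ] H :=
    { toFun := sol, map_add' := hsoladd, map_smul' := hsolsmul }
  let Pl : E →ₗ[ℝ] E := Kpot.subtype.comp Kpot.orthogonalProjectionOnto.toLinearMap
  let Sl : H →ₗ[ℝ] E := Pl.comp (A.comp G)
  let T : L2 →ₗ[ℝ] E := Sl.comp solL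
  have hTdef : ∀ f : L2, T f = (Kpot.orthogonalProjectionOnto (A (G (sol f))) : E) :=
    fun f => rfl
  have hSldef : ∀ v : H, Sl v = (Kpot.orthogonalProjectionOnto (A (G v)) : E) :=
    fun v => rfl
  have hTS : ∀ (f : L2) (v : H),
      (Kpot.orthogonalProjectionOnto (A (G (sol f - v))) : E) = T f - Sl v := by
    intro f v
    have h1 : sol f - v = solL f - v := rfl
    rw [h1, map_sub, map_sub, map_sub, Submodule.coe_sub]
    rfl
  -- orthogonality against `Kpot` via closure
  have hKperp : ∀ z : E, (∀ φ : H, ⟪z, G φ⟫ = 0) → ∀ w ∈ Kpot, ⟪z, w⟫ = 0 := by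
    intro z hz w hw
    have hclosed : IsClosed {x : E | ⟪z, x⟫ = 0} :=
      isClosed_eq (Continuous.inner continuous_const continuous_id) continuous_const
    have hsub : closure ((LinearMap.range G : Submodule ℝ E) : Set E)
        ⊆ {x : E | ⟪z, x⟫ = 0} := by
      apply closure_minimal _ hclosed
      rintro x ⟨φ, rfl⟩
      exact hz φ
    have hw' : w ∈ closure ((LinearMap.range G : Submodule ℝ E) : Set E) := by
      rw [← Submodule.topologicalClosure_coe, ← hK]; exact hw
    exact hsub hw'
  have hnormK : ∀ ξ : E, ξ ∈ Kpot → ∀ C : ℝ, 0 ≤ C →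
      (∀ φ : H, ⟪ξ, G φ⟫ ≤ C * ‖G φ‖) → ‖ξ‖ ≤ C := by
    intro ξ hξ C hC hbd
    have hclosed : IsClosed {x : E | ⟪ξ, x⟫ ≤ C * ‖x‖} :=
      isClosed_le (Continuous.inner continuous_const continuous_id)
        (continuous_const.mul continuous_norm)
    have hsub : closure ((LinearMap.range G : Submodule ℝ E) : Set E)
        ⊆ {x : E | ⟪ξ, x⟫ ≤ C * ‖x‖} := by
      apply closure_minimal _ hclosed
      rintro x ⟨φ, rfl⟩
      exact hbd φ
    have hξ2 : ⟪ξ, ξ⟫ ≤ C * ‖ξ‖ := by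
      apply hsub
      rw [← Submodule.topologicalClosure_coe, ← hK]; exact hξ
    rw [real_inner_self_eq_norm_sq] at hξ2
    rcases eq_or_lt_of_le (norm_nonneg ξ) with h0 | h0
    · rw [← h0]; exact hC
    · nlinarith
  -- the key estimate
  have hKey : ∀ (M : ℕ) (h : L2), (∀ k, k < M → ⟪e k, h⟫ = 0) →
      ‖T h‖ ≤ 1 / Real.sqrt (μ M) * ‖h‖ := by
    intro M h hperp
    have hTmem : T h ∈ Kpot := (Kpot.orthogonalProjectionOnto (A (G (sol h)))).2
    apply hnormK _ hTmem _
      (mul_nonneg (one_div_nonneg.2 (Real.sqrt_nonneg _)) (norm_nonneg _))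
    intro φ
    have hsum : Summable fun k => ⟪h, e k⟫ * ⟪e k, ι φ⟫ := by
      have h1 := b.summable_inner_mul_inner h (ι φ)
      simp only [hbk] at h1
      exact h1
    have hexp : ⟪h, ι φ⟫ = ∑' k, ⟪h, e k⟫ * ⟪e k, ι φ⟫ := by
      have h1 := b.tsum_inner_mul_inner h (ι φ)
      simp only [hbk] at h1
      exact h1.symm
    have hsumsq : Summable fun k => ⟪h, e k⟫ ^ 2 := by
      have h1 := b.summable_inner_mul_inner h h
      simp only [hbk] at h1
      apply h1.congr
      intro k
      rw [real_inner_comm h (e k), sq]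
    have hpars : ∑' k, ⟪h, e k⟫ ^ 2 = ‖h‖ ^ 2 := by
      have h1 := b.tsum_inner_mul_inner h h
      simp only [hbk] at h1
      rw [real_inner_self_eq_norm_sq] at h1
      rw [← h1]
      apply tsum_congr
      intro k
      rw [real_inner_comm h (e k), sq]
    have key2 : ∑' k, ⟪h, e k⟫ * ⟪e k, ι φ⟫ ≤ 1 / Real.sqrt (μ M) * ‖h‖ * ‖G φ‖ := by
      apply Summable.tsum_le_of_sum_le hsum
      intro s
      have hterm : ∀ k, ⟪h, e k⟫ * ⟪e k, ι φ⟫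
          = (⟪h, e k⟫ / Real.sqrt (μ k)) * ⟪g k, G φ⟫ := by
        intro k
        have hq : ⟪g k, G φ⟫ = Real.sqrt (μ k) * ⟪e k, ι φ⟫ := by
          have h1 : ⟪g k, G φ⟫ = (Real.sqrt (μ k))⁻¹ * ⟪G (j (Ψ k)), G φ⟫ := by
            rw [hgdef]; exact real_inner_smul_left _ _ _
          rw [h1, hEig k φ]
          set sk := Real.sqrt (μ k) with hsk
          have hs : sk * sk = μ k := hsqmul k
          have hskne : sk ≠ 0 := (hsqpos k).ne'
          rw [← hs]
          field_simp
        rw [hq]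
        have hskne : Real.sqrt (μ k) ≠ 0 := (hsqpos k).ne'
        field_simp
      rw [Finset.sum_congr rfl fun k _ => hterm k]
      have hcs := Finset.sum_mul_sq_le_sq_mul_sq s
        (fun k => ⟪h, e k⟫ / Real.sqrt (μ k)) (fun k => ⟪g k, G φ⟫)
      have hFb : ∑ k ∈ s, (⟪h, e k⟫ / Real.sqrt (μ k)) ^ 2 ≤ ‖h‖ ^ 2 / μ M := by
        calc ∑ k ∈ s, (⟪h, e k⟫ / Real.sqrt (μ k)) ^ 2
            ≤ ∑ k ∈ s, ⟪h, e k⟫ ^ 2 / μ M := by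
              apply Finset.sum_le_sum
              intro k _
              rw [div_pow, Real.sq_sqrt (hμnn k)]
              by_cases hk : k < M
              · have h0 : ⟪h, e k⟫ = 0 := by
                  rw [real_inner_comm]; exact hperp k hk
                rw [h0]
                simp [div_nonneg, sq_nonneg, (hμpos M).le]
              · push_neg at hk
                exact div_le_div_of_nonneg_left (sq_nonneg _) (hμpos M) (hμmono hk)
          _ = (∑ k ∈ s, ⟪h, e k⟫ ^ 2) / μ M := by rw [Finset.sum_div]
          _ ≤ ‖h‖ ^ 2 / μ M := by
              apply (div_le_div_iff_of_pos_right (hμpos M)).2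
              rw [← hpars]
              exact Summable.sum_le_tsum s (fun k _ => sq_nonneg _) hsumsq
      have hQb : ∑ k ∈ s, (⟪g k, G φ⟫) ^ 2 ≤ ‖G φ‖ ^ 2 := by
        have h1 := hong.sum_inner_products_le (G φ) (s := s)
        simpa [Real.norm_eq_abs, sq_abs] using h1
      apply sqle _ _ (mul_nonneg (mul_nonneg
        (one_div_nonneg.2 (Real.sqrt_nonneg _)) (norm_nonneg _)) (norm_nonneg _))
      calc (∑ k ∈ s, (⟪h, e k⟫ / Real.sqrt (μ k)) * ⟪g k, G φ⟫) ^ 2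
          ≤ (∑ k ∈ s, (⟪h, e k⟫ / Real.sqrt (μ k)) ^ 2) * ∑ k ∈ s, (⟪g k, G φ⟫) ^ 2 := hcs
        _ ≤ (‖h‖ ^ 2 / μ M) * ‖G φ‖ ^ 2 := by
            apply mul_le_mul hFb hQb (Finset.sum_nonneg fun k _ => sq_nonneg _)
              (div_nonneg (sq_nonneg _) (hμnn M))
        _ = (1 / Real.sqrt (μ M) * ‖h‖ * ‖G φ‖) ^ 2 := by
            rw [mul_pow, mul_pow, div_pow, one_pow, Real.sq_sqrt (hμnn M)]
            ring
    have h3 : ⟪T h, G φ⟫ = ⟪h, ι φ⟫ := hTpair h φ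
    rw [h3, hexp]
    exact key2
  -- the image of the eigenfunctions
  have hTe : ∀ k : ℕ, T ((μ k) • e k) = G (j (Ψ k)) := by
    intro k
    rw [hTdef]
    rw [← Submodule.starProjection_apply]
    apply Submodule.eq_starProjection_of_mem_of_inner_eq_zero (hGmem (j (Ψ k)))
    intro w hw
    apply hKperp _ _ w hw
    intro φ
    rw [inner_sub_left, hsol, hEig k φ, real_inner_smul_left]
    ring
  have hTe' : ∀ k : ℕ, T (e k) = (μ k)⁻¹ • G (j (Ψ k)) := by
    intro k
    have h1 : T ((μ k) • e k) = G (j (Ψ k)) := hTe k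
    rw [map_smul] at h1
    rw [← h1, smul_smul, inv_mul_cancel₀ (hμpos k).ne', one_smul]
  have hSθ : ∀ k : ℕ, Sl (sol ((μ k) • e k)) = G (j (Ψ k)) := fun k => hTe k
  -- linear independence of the θ's
  have hindN : LinearIndependent ℝ (fun k : Fin N => sol ((μ (k : ℕ)) • e (k : ℕ))) := by
    apply LinearIndependent.of_comp Sl
    have hcomp : (⇑Sl ∘ fun k : Fin N => sol ((μ (k : ℕ)) • e (k : ℕ)))
        = fun k : Fin N => G (j (Ψ (k : ℕ))) := by
      funext k; exact hSθ k
    rw [hcomp]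
    have h2 : (fun k : Fin N => G (j (Ψ (k : ℕ))))
        = (fun k : Fin N => Units.mk0 (Real.sqrt (μ (k : ℕ))) (hsqpos (k : ℕ)).ne')
          • (fun k : Fin N => g (k : ℕ)) := by
      funext k
      rw [Pi.smul_apply', hgdef]
      simp only [Units.smul_mk0]
      rw [smul_smul, mul_inv_cancel₀ (hsqpos (k : ℕ)).ne', one_smul]
    rw [h2]
    exact ((hong.comp _ Fin.val_injective).linearIndependent).units_smul _
  have hrankΘ : Module.finrank ℝ
      (Submodule.span ℝ (Set.range fun k : Fin N => sol ((μ (k : ℕ)) • e (k : ℕ)))) = N := by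
    rw [finrank_span_eq_card hindN, Fintype.card_fin]
  -- rewrite the goal via T and Sl
  simp only [hTS]
  set c₀ : ℝ := 1 / Real.sqrt (μ N) with hc₀
  have hc₀pos : 0 < c₀ := one_div_pos.2 (hsqpos N)
  haveI : Nonempty L2 := ⟨0⟩
  -- lower bound for the inner infimum family (bddBelow)
  have hlb : ∀ (V : Submodule ℝ H) (f : L2),
      BddBelow (Set.range fun v : V => ‖T f - Sl (v : H)‖ / ‖f‖) := by
    intro V f
    exact ⟨0, by rintro x ⟨v, rfl⟩; positivity⟩
  -- upper bound 1/√μ₀ for each inner infimum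
  have hDub : ∀ (V : Submodule ℝ H) (f : L2),
      (⨅ v : V, ‖T f - Sl (v : H)‖ / ‖f‖) ≤ 1 / Real.sqrt (μ 0) := by
    intro V f
    have hv0 : (⨅ v : V, ‖T f - Sl (v : H)‖ / ‖f‖) ≤ ‖T f - Sl (0 : H)‖ / ‖f‖ :=
      ciInf_le (hlb V f) (⟨0, V.zero_mem⟩ : V)
    rcases eq_or_ne f 0 with rfl | hf
    · refine hv0.trans ?_
      simp only [map_zero, sub_zero, norm_zero, div_zero]
      exact one_div_nonneg.2 (Real.sqrt_nonneg _)
    · refine hv0.trans ?_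
      rw [map_zero, sub_zero]
      have h1 : ‖T f‖ ≤ 1 / Real.sqrt (μ 0) * ‖f‖ :=
        hKey 0 f (fun k hk => absurd hk (Nat.not_lt_zero k))
      rw [div_le_iff₀ (norm_pos_iff.2 hf)]
      exact h1
  have hbddA : ∀ V : Submodule ℝ H,
      BddAbove (Set.range fun f : L2 => ⨅ v : V, ‖T f - Sl (v : H)‖ / ‖f‖) := by
    intro V
    exact ⟨1 / Real.sqrt (μ 0), by rintro x ⟨f, rfl⟩; exact hDub V f⟩
  -- Step A : lower bound for any N-dimensional V
  have stepA : ∀ (V : Submodule ℝ H), Module.finrank ℝ V = N →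
      ∃ f : L2, c₀ ≤ ⨅ v : V, ‖T f - Sl (v : H)‖ / ‖f‖ := by
    intro V hV
    haveI : FiniteDimensional ℝ V := Module.finite_of_finrank_pos (by omega)
    set SV : Submodule ℝ E := V.map Sl with hSVdef
    have hrankSV : Module.finrank ℝ SV ≤ N := hV ▸ Submodule.finrank_map_le Sl V
    let qlin : (Fin (N+1) → ℝ) →ₗ[ℝ] L2 :=
      { toFun := fun c => ∑ k : Fin (N+1), c k • e (k : ℕ)
        map_add' := by intro x y; simp [add_smul, Finset.sum_add_distrib]
        map_smul' := by intro m x; simp [smul_smul, Finset.smul_sum] }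
    let Φ : (Fin (N+1) → ℝ) →ₗ[ℝ] SV :=
      SV.orthogonalProjectionOnto.toLinearMap.comp (T.comp qlin)
    have hΦ : ¬ Function.Injective Φ := by
      intro hinj
      have h1 := LinearMap.finrank_le_finrank_of_injective hinj
      rw [Module.finrank_fin_fun] at h1
      omega
    obtain ⟨x, y, hxy, hne⟩ := Function.not_injective_iff.1 hΦ
    set c : Fin (N+1) → ℝ := x - y with hcdef
    have hc0 : Φ c = 0 := by rw [map_sub, hxy, sub_self]
    have hcne : c ≠ 0 := sub_ne_zero.2 hne
    set f : L2 := qlin c with hfdef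
    have hf' : f = ∑ k : Fin (N+1), c k • e (k : ℕ) := rfl
    have honbF : Orthonormal ℝ (fun k : Fin (N+1) => e (k : ℕ)) :=
      honb.comp _ Fin.val_injective
    have hnormf : ‖f‖ ^ 2 = ∑ k : Fin (N+1), (c k) ^ 2 := by
      rw [← real_inner_self_eq_norm_sq, hf', honbF.inner_sum c c Finset.univ]
      apply Finset.sum_congr rfl
      intro k _
      simp [sq]
    have hfne : f ≠ 0 := by
      intro h0
      apply hcne
      have h1 : ∑ k : Fin (N+1), (c k) ^ 2 = 0 := by
        rw [← hnormf, h0, norm_zero]; ring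
      have h2 := (Finset.sum_eq_zero_iff_of_nonneg
        (fun k _ => sq_nonneg (c k))).1 h1
      funext k
      have h3 := h2 k (Finset.mem_univ k)
      exact pow_eq_zero_iff two_ne_zero |>.1 h3
    have hfpos : 0 < ‖f‖ := norm_pos_iff.2 hfne
    have hTfperp : T f ∈ SVᗮ := by
      have h1 : SV.orthogonalProjectionOnto (T f) = 0 := hc0
      exact Submodule.orthogonalProjectionOnto_eq_zero_iff.1 h1
    -- norm of T f from below
    have hongF : Orthonormal ℝ (fun k : Fin (N+1) => g (k : ℕ)) :=
      hong.comp _ Fin.val_injective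
    have hTf : T f = ∑ k : Fin (N+1), (c k / Real.sqrt (μ (k : ℕ))) • g (k : ℕ) := by
      rw [hf', map_sum]
      apply Finset.sum_congr rfl
      intro k _
      rw [map_smul, hTe']
      simp only [hgdef]
      rw [smul_smul, smul_smul]
      congr 1
      set sk := Real.sqrt (μ (k : ℕ)) with hsk
      have hs : sk * sk = μ (k : ℕ) := hsqmul (k : ℕ)
      have hskne : sk ≠ 0 := (hsqpos (k : ℕ)).ne'
      rw [← hs]
      field_simp
    have hTfnorm : ‖f‖ ^ 2 / μ N ≤ ‖T f‖ ^ 2 := by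
      have h1 : ‖T f‖ ^ 2 = ∑ k : Fin (N+1), (c k / Real.sqrt (μ (k : ℕ))) ^ 2 := by
        rw [hTf, ← real_inner_self_eq_norm_sq,
          hongF.inner_sum (fun k => c k / Real.sqrt (μ (k : ℕ)))
            (fun k => c k / Real.sqrt (μ (k : ℕ))) Finset.univ]
        apply Finset.sum_congr rfl
        intro k _
        simp [sq]
      rw [h1, hnormf, Finset.sum_div]
      apply Finset.sum_le_sum
      intro k _
      have hkN : μ (k : ℕ) ≤ μ N := hμmono (by omega : (k : ℕ) ≤ N)
      rw [div_pow, Real.sq_sqrt (hμnn (k : ℕ))]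
      exact div_le_div_of_nonneg_left (sq_nonneg _) (hμpos (k : ℕ)) hkN
    refine ⟨f, ?_⟩
    haveI : Nonempty V := ⟨⟨0, V.zero_mem⟩⟩
    apply le_ciInf
    intro v
    have hperpv : ⟪T f, Sl (v : H)⟫ = 0 := by
      rw [real_inner_comm]
      exact (Submodule.mem_orthogonal SV (T f)).1 hTfperp _ (Submodule.mem_map_of_mem v.2)
    have hnorm1 : ‖T f‖ ≤ ‖T f - Sl (v : H)‖ := by
      apply sqle _ _ (norm_nonneg _)
      rw [norm_sub_sq_real, hperpv]
      nlinarith [sq_nonneg ‖Sl (v : H)‖]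
    have hnorm2 : c₀ * ‖f‖ ≤ ‖T f‖ := by
      apply sqle _ _ (norm_nonneg _)
      rw [mul_pow, hc₀, div_pow, one_pow, Real.sq_sqrt (hμnn N)]
      calc (1 / μ N) * ‖f‖ ^ 2 = ‖f‖ ^ 2 / μ N := by ring
        _ ≤ ‖T f‖ ^ 2 := hTfnorm
    rw [le_div_iff₀ hfpos]
    exact hnorm2.trans hnorm1
  -- Step B : upper bound for the span of the θ's
  set ΘS : Submodule ℝ H :=
    Submodule.span ℝ (Set.range fun k : Fin N => sol ((μ (k : ℕ)) • e (k : ℕ))) with hΘS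
  have stepB : ∀ f : L2, (⨅ v : ΘS, ‖T f - Sl (v : H)‖ / ‖f‖) ≤ c₀ := by
    intro f
    rcases eq_or_ne f 0 with rfl | hf
    · refine le_trans (ciInf_le (hlb ΘS 0) (⟨0, ΘS.zero_mem⟩ : ΘS)) ?_
      rw [norm_zero, div_zero]
      exact hc₀pos.le
    · set cN : Fin N → ℝ := fun k => ⟪e (k : ℕ), f⟫ with hcN
      set fpar : L2 := ∑ k : Fin N, cN k • e (k : ℕ) with hfpar
      have honbN : Orthonormal ℝ (fun k : Fin N => e (k : ℕ)) :=
        honb.comp _ Fin.val_injective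
      have hv0mem : solL fpar ∈ ΘS := by
        rw [hfpar, map_sum]
        apply Submodule.sum_mem
        intro k _
        rw [map_smul]
        have h1 : solL (e (k : ℕ)) = (μ (k : ℕ))⁻¹ • sol ((μ (k : ℕ)) • e (k : ℕ)) := by
          have h2 : sol ((μ (k : ℕ)) • e (k : ℕ)) = solL ((μ (k : ℕ)) • e (k : ℕ)) := rfl
          rw [h2, map_smul, smul_smul, inv_mul_cancel₀ (hμpos (k : ℕ)).ne', one_smul]
        rw [h1, smul_smul]
        exact Submodule.smul_mem _ _ (Submodule.subset_span ⟨k, rfl⟩)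
      have hperp2 : ∀ m, m < N → ⟪e m, f - fpar⟫ = 0 := by
        intro m hm
        rw [inner_sub_right]
        have h1 : ⟪e m, fpar⟫ = cN ⟨m, hm⟩ := by
          rw [hfpar]
          exact honbN.inner_right_fintype cN ⟨m, hm⟩
        rw [h1, hcN]
        simp
      have hfparperp : ⟪fpar, f - fpar⟫ = 0 := by
        rw [hfpar, sum_inner]
        apply Finset.sum_eq_zero
        intro k _
        rw [real_inner_smul_left, hperp2 _ k.isLt, mul_zero]
      have hnorm3 : ‖f - fpar‖ ≤ ‖f‖ := by
        apply sqle _ _ (norm_nonneg f)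
        have h4' : fpar + (f - fpar) = f := by abel
        have h5 := norm_add_sq_real fpar (f - fpar)
        rw [h4', hfparperp] at h5
        nlinarith [sq_nonneg ‖fpar‖]
      have hKf : ‖T (f - fpar)‖ ≤ 1 / Real.sqrt (μ N) * ‖f - fpar‖ := hKey N (f - fpar) hperp2
      have hTv : T f - Sl (solL fpar) = T (f - fpar) := by
        rw [map_sub]
        rfl
      have hfpos : 0 < ‖f‖ := norm_pos_iff.2 hf
      calc (⨅ v : ΘS, ‖T f - Sl (v : H)‖ / ‖f‖)
          ≤ ‖T f - Sl (solL fpar)‖ / ‖f‖ := ciInf_le (hlb ΘS f) (⟨solL fpar, hv0mem⟩ : ΘS)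
        _ = ‖T (f - fpar)‖ / ‖f‖ := by rw [hTv]
        _ ≤ (1 / Real.sqrt (μ N) * ‖f - fpar‖) / ‖f‖ := by
            apply (div_le_div_iff_of_pos_right hfpos).2
            exact hKf
        _ ≤ (1 / Real.sqrt (μ N) * ‖f‖) / ‖f‖ := by
            apply (div_le_div_iff_of_pos_right hfpos).2
            exact mul_le_mul_of_nonneg_left hnorm3 (by positivity)
        _ = c₀ := by
            rw [hc₀, mul_div_assoc, div_self hfpos.ne', mul_one]
  haveI : Nonempty {V : Submodule ℝ H // Module.finrank ℝ V = N} := ⟨⟨ΘS, hrankΘ⟩⟩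
  constructor
  · apply le_antisymm
    · have hle : (⨆ f : L2, ⨅ v : ΘS, ‖T f - Sl (v : H)‖ / ‖f‖) ≤ c₀ := ciSup_le stepB
      refine le_trans (ciInf_le ?_ (⟨ΘS, hrankΘ⟩ : {V : Submodule ℝ H // Module.finrank ℝ V = N})) hle
      refine ⟨0, ?_⟩
      rintro x ⟨V, rfl⟩
      exact Real.iSup_nonneg fun f => Real.iInf_nonneg fun v => by positivity
    · apply le_ciInf
      rintro ⟨V, hV⟩
      obtain ⟨f, hf⟩ := stepA V hV
      exact hf.trans (le_ciSup (hbddA V) f)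
  · apply le_antisymm
    · exact ciSup_le stepB
    · obtain ⟨f, hf⟩ := stepA ΘS hrankΘ
      exact hf.trans (le_ciSup (hbddA ΘS) f)
end

section
/- (Equivalence of flux-error plus non-conforming error with full gradient error) There exists C depending only on λ_min(a), λ_max(a) such that for all u ∈ H¹₀(Ω) and ζ ∈ (L²(Ω))^d: (1/C)(‖(a(∇u−ζ))_pot‖_{L²} + ‖ζ_curl‖_{L²}) ≤ ‖∇u − ζ‖_{L²} ≤ C(‖(a(∇u−ζ))_pot‖_{L²} + ‖ζ_curl‖_{L²}), where ζ = ζ_pot + ζ_curl is the Weyl–Helmholtz decomposition. -/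
open RealInnerProductSpace

/-- Cauchy–Schwarz for a positive symmetric bilinear form given by an operator. -/
lemma cs_form_aux {E : Type} [NormedAddCommGroup E] [InnerProductSpace ℝ E]
    (A : E →ₗ[ℝ] E) (hsymm : ∀ ξ η : E, ⟪A ξ, η⟫ = ⟪ξ, A η⟫)
    (hpos : ∀ ξ : E, 0 ≤ ⟪ξ, A ξ⟫) (x y : E) :
    ⟪x, A y⟫ ^ 2 ≤ ⟪x, A x⟫ * ⟪y, A y⟫ := by
  have h : ∀ t : ℝ, 0 ≤ ⟪y, A y⟫ * (t * t) + (2 * ⟪x, A y⟫) * t + ⟪x, A x⟫ := by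
    intro t
    have h0 := hpos (x + t • y)
    have hyx : ⟪y, A x⟫ = ⟪x, A y⟫ := by
      rw [← hsymm y x, real_inner_comm]
    simp only [map_add, map_smul, inner_add_left, inner_add_right,
      real_inner_smul_left, real_inner_smul_right, hyx] at h0
    nlinarith [h0]
  have hd := discrim_le_zero h
  unfold discrim at hd
  nlinarith [hd]

set_option maxHeartbeats 1000000 in
/-- Lemma `kkhkjhkjhu`: there is a constant `C` depending only on
`λ_min(a)` and `λ_max(a)` such that for all `u ∈ H¹₀(Ω)` and `ζ ∈ (L²(Ω))^d`,
`(1/C)(‖(a(∇u−ζ))_pot‖ + ‖ζ_curl‖) ≤ ‖∇u − ζ‖ ≤ C(‖(a(∇u−ζ))_pot‖ + ‖ζ_curl‖)`,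
where `ζ = ζ_pot + ζ_curl` is the Weyl–Helmholtz decomposition.

Abstract encoding: `E = (L²(Ω))^d` a Hilbert space, `Kpot = L²_pot(Ω)` a subspace with an
orthogonal projection `P` (so `ζ_pot = P ζ` and `ζ_curl = ζ − P ζ`), `H = H¹₀(Ω)` with
gradient `G` taking values in `Kpot`, and `A` multiplication by the symmetric matrix
`a(x)` with ellipticity bounds `lmin`, `lmax`. The constant `C` is quantified before the
spaces and data, so it depends only on `lmin` and `lmax`. -/
theorem gradient_error_equivalent_flux_plus_curl :
    ∀ lmin lmax : ℝ, 0 < lmin → lmin ≤ lmax →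
    ∃ C : ℝ, 0 < C ∧
      ∀ (E H : Type) [NormedAddCommGroup E] [InnerProductSpace ℝ E] [CompleteSpace E]
        [AddCommGroup H] [Module ℝ H],
      ∀ (G : H →ₗ[ℝ] E) (Kpot : Submodule ℝ E) [Kpot.HasOrthogonalProjection],
        (∀ ψ : H, G ψ ∈ Kpot) →
      ∀ A : E →ₗ[ℝ] E,
        (∀ ξ η : E, ⟪A ξ, η⟫ = ⟪ξ, A η⟫) →
        (∀ ξ : E, lmin * ‖ξ‖ ^ 2 ≤ ⟪ξ, A ξ⟫) →
        (∀ ξ : E, ⟪ξ, A ξ⟫ ≤ lmax * ‖ξ‖ ^ 2) →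
      ∀ (u : H) (ζ : E),
        (1 / C) * (‖(Kpot.orthogonalProjectionOnto (A (G u - ζ)) : E)‖ +
            ‖ζ - (Kpot.orthogonalProjectionOnto ζ : E)‖) ≤ ‖G u - ζ‖ ∧
        ‖G u - ζ‖ ≤ C * (‖(Kpot.orthogonalProjectionOnto (A (G u - ζ)) : E)‖ +
            ‖ζ - (Kpot.orthogonalProjectionOnto ζ : E)‖) := by
  intro lmin lmax hlmin hle
  have hlmax : 0 < lmax := lt_of_lt_of_le hlmin hle
  refine ⟨(1 + lmax) * (1 + 1 / lmin), by positivity, ?_⟩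
  intro E H _ _ _ _ _ G Kpot _ hG A hsymm hlow hupp u ζ
  set C : ℝ := (1 + lmax) * (1 + 1 / lmin) with hC
  have hCpos : 0 < C := by positivity
  set e : E := G u - ζ with he
  set p : E := (Kpot.orthogonalProjectionOnto (A e) : E) with hp
  -- the "curl" part of ζ equals minus the curl part of e
  have hPe : (Kpot.orthogonalProjectionOnto e : E)
      = G u - (Kpot.orthogonalProjectionOnto ζ : E) := by
    rw [he, map_sub, Submodule.coe_sub, ← Submodule.starProjection_apply,
      Submodule.starProjection_eq_self_iff.mpr (hG u)]
  set q : E := e - (Kpot.orthogonalProjectionOnto e : E) with hq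
  have hzq : ζ - (Kpot.orthogonalProjectionOnto ζ : E) = -q := by
    rw [hq, hPe, he]; abel
  have hznorm : ‖ζ - (Kpot.orthogonalProjectionOnto ζ : E)‖ = ‖q‖ := by
    rw [hzq, norm_neg]
  -- orthogonality facts
  have hq_orth : ∀ k ∈ Kpot, ⟪k, q⟫ = 0 := by
    intro k hk
    exact (Submodule.mem_orthogonal Kpot q).mp
      (Submodule.sub_starProjection_mem_orthogonal (K := Kpot) e) k hk
  have hAe_orth : ∀ k ∈ Kpot, ⟪k, A e - p⟫ = 0 := by
    intro k hk
    exact (Submodule.mem_orthogonal Kpot _).mp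
      (Submodule.sub_starProjection_mem_orthogonal (K := Kpot) (A e)) k hk
  have hpmem : p ∈ Kpot := SetLike.coe_mem _
  have hPemem : (Kpot.orthogonalProjectionOnto e : E) ∈ Kpot := SetLike.coe_mem _
  have hpos : ∀ ξ : E, 0 ≤ ⟪ξ, A ξ⟫ := fun ξ =>
    le_trans (by positivity) (hlow ξ)
  -- ‖q‖ ≤ ‖e‖
  have hqe : ‖q‖ ≤ ‖e‖ := by
    have h1 : ⟪q, q⟫ = ⟪q, e⟫ := by
      have : ⟪q, e - q⟫ = 0 := by
        have : e - q = (Kpot.orthogonalProjectionOnto e : E) := by rw [hq]; abel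
        rw [this, real_inner_comm]
        exact hq_orth _ hPemem
      have h2 : ⟪q, e⟫ = ⟪q, q⟫ + ⟪q, e - q⟫ := by
        rw [← inner_add_right]; norm_num
      rw [h2, this, add_zero]
    have h3 : ‖q‖ ^ 2 ≤ ‖q‖ * ‖e‖ := by
      rw [← real_inner_self_eq_norm_sq, h1]
      exact real_inner_le_norm q e
    nlinarith [norm_nonneg q, norm_nonneg e]
  -- ‖Pe‖ ≤ ‖e‖
  have hPee : ‖(Kpot.orthogonalProjectionOnto e : E)‖ ≤ ‖e‖ := by
    set r : E := (Kpot.orthogonalProjectionOnto e : E)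
    have h1 : ⟪r, r⟫ = ⟪r, e⟫ := by
      have h0 : ⟪r, e - r⟫ = 0 := hq_orth r hPemem
      have h2 : ⟪r, e⟫ = ⟪r, r⟫ + ⟪r, e - r⟫ := by
        rw [← inner_add_right]; norm_num
      rw [h2, h0, add_zero]
    have h3 : ‖r‖ ^ 2 ≤ ‖r‖ * ‖e‖ := by
      rw [← real_inner_self_eq_norm_sq, h1]
      exact real_inner_le_norm r e
    nlinarith [norm_nonneg r, norm_nonneg e]
  -- ⟪p, A e⟫ = ‖p‖²
  have hpAe : ⟪p, A e⟫ = ‖p‖ ^ 2 := by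
    have h2 : ⟪p, A e⟫ = ⟪p, p⟫ + ⟪p, A e - p⟫ := by
      rw [← inner_add_right]; norm_num
    rw [h2, hAe_orth p hpmem, add_zero, real_inner_self_eq_norm_sq]
  -- ‖p‖ ≤ lmax ‖e‖
  have hple : ‖p‖ ≤ lmax * ‖e‖ := by
    have hcs := cs_form_aux A hsymm hpos p e
    have h1 := hupp p
    have h2 := hupp e
    have h3 := hpos p
    have h4 := hpos e
    rw [hpAe] at hcs
    have h5 : inner ℝ p (A p) * inner ℝ e (A e) ≤ (lmax * ‖p‖ ^ 2) * (lmax * ‖e‖ ^ 2) :=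
      mul_le_mul h1 h2 h4 (by positivity)
    by_cases hp0 : ‖p‖ = 0
    · rw [hp0]; positivity
    · have hp1 : 0 < ‖p‖ := lt_of_le_of_ne (norm_nonneg p) (Ne.symm hp0)
      have h6 : ‖p‖ ^ 2 ≤ (lmax * ‖e‖) ^ 2 := by
        have h7 : ‖p‖ ^ 2 * ‖p‖ ^ 2 ≤ (lmax * ‖e‖) ^ 2 * ‖p‖ ^ 2 := by nlinarith
        exact le_of_mul_le_mul_right h7 (by positivity)
      nlinarith [mul_nonneg hlmax.le (norm_nonneg e)]
  -- ⟪q, A e⟫ ≤ lmax ‖q‖ ‖e‖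
  have hqAe : ⟪q, A e⟫ ≤ lmax * ‖q‖ * ‖e‖ := by
    have hcs := cs_form_aux A hsymm hpos q e
    have h1 := hupp q
    have h2 := hupp e
    have h3 := hpos q
    have h4 := hpos e
    have h5 : inner ℝ q (A q) * inner ℝ e (A e) ≤ (lmax * ‖q‖ ^ 2) * (lmax * ‖e‖ ^ 2) :=
      mul_le_mul h1 h2 h4 (by positivity)
    have h6 : inner ℝ q (A e) ^ 2 ≤ (lmax * ‖q‖ * ‖e‖) ^ 2 := by nlinarith
    have h7 : (0:ℝ) ≤ lmax * ‖q‖ * ‖e‖ := by positivity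
    nlinarith [h6, h7]
  -- lower energy bound
  have hlowe : lmin * ‖e‖ ^ 2 ≤ ‖e‖ * ‖p‖ + lmax * ‖q‖ * ‖e‖ := by
    have h1 : ⟪e, A e⟫ = ⟪(Kpot.orthogonalProjectionOnto e : E), A e⟫ + ⟪q, A e⟫ := by
      rw [← inner_add_left, hq]; norm_num
    have h2 : ⟪(Kpot.orthogonalProjectionOnto e : E), A e⟫
        ≤ ‖e‖ * ‖p‖ := by
      set r : E := (Kpot.orthogonalProjectionOnto e : E)
      have h3 : ⟪r, A e⟫ = ⟪r, p⟫ + ⟪r, A e - p⟫ := by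
        rw [← inner_add_right]; norm_num
      rw [h3, hAe_orth r hPemem, add_zero]
      calc ⟪r, p⟫ ≤ ‖r‖ * ‖p‖ := real_inner_le_norm r p
        _ ≤ ‖e‖ * ‖p‖ := mul_le_mul_of_nonneg_right hPee (norm_nonneg p)
    have := hlow e
    nlinarith [hqAe]
  constructor
  · -- (1/C)(‖p‖+‖q‖) ≤ ‖e‖
    rw [hznorm, one_div, inv_mul_le_iff₀ hCpos]
    have : ‖p‖ + ‖q‖ ≤ (lmax + 1) * ‖e‖ := by nlinarith
    have hC1 : lmax + 1 ≤ C := by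
      rw [hC]
      have h1 : 0 < 1 / lmin := by positivity
      nlinarith
    nlinarith [norm_nonneg e, add_nonneg (norm_nonneg p) (norm_nonneg q)]
  · -- ‖e‖ ≤ C(‖p‖+‖q‖)
    rw [hznorm]
    by_cases he0 : ‖e‖ = 0
    · rw [he0]
      positivity
    · have he1 : 0 < ‖e‖ := lt_of_le_of_ne (norm_nonneg e) (Ne.symm he0)
      have hkey : lmin * ‖e‖ ≤ ‖p‖ + lmax * ‖q‖ := by nlinarith
      have hCl : lmin * C = (1 + lmax) * (lmin + 1) := by
        rw [hC]; field_simp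
      -- suffices lmin‖e‖ ≤ lmin C (‖p‖+‖q‖)
      rw [← mul_le_mul_iff_right₀ hlmin, ← mul_assoc, hCl]
      nlinarith [norm_nonneg p, norm_nonneg q,
        mul_nonneg hlmin.le (norm_nonneg p), mul_nonneg hlmax.le (norm_nonneg p),
        mul_nonneg (mul_nonneg hlmin.le hlmax.le) (norm_nonneg p),
        mul_nonneg hlmin.le (norm_nonneg q), mul_nonneg hlmax.le (norm_nonneg q),
        mul_nonneg (mul_nonneg hlmin.le hlmax.le) (norm_nonneg q)]
end

section
/- (Nonzero Neumann flux-norm representation) For h ∈ L²(∂Ω) let w^h ∈ H¹(Ω) solve Δw^h = 0 in Ω with n·∇w^h = h on ∂Ω (with mean-zero compatibility), and for v ∈ H¹(Ω) set h_v := n·a∇v on ∂Ω. Then ‖(∇w^h − a∇v)_potn‖²_{L²(Ω)} = ∫_{∂Ω}(h − h_v)Λ^{−1}(h − h_v), where Λ is the Dirichlet-to-Neumann map of the Laplacian on Ω and (·)_potn is the projection onto the closure of {∇v : v ∈ H¹(Ω)} in (L²(Ω))^d. -/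
open RealInnerProductSpace

/-- Lemma `h2`, nonzero Neumann flux-norm representation: for
`h ∈ L²(∂Ω)` let `w^h ∈ H¹(Ω)` be harmonic with Neumann data `n·∇w^h = h`
(weakly: `⟪∇w^h, ∇φ⟫ = ⟪h, φ|_{∂Ω}⟫` for all `φ ∈ H¹(Ω)`, which encodes both
`Δw^h = 0` and the boundary condition, and forces the mean-zero compatibility of `h`);
for `v ∈ H¹(Ω)` let `h_v = n·a∇v` (weakly: `⟪a∇v, ∇φ⟫ = ⟪h_v, φ|_{∂Ω}⟫ ∀φ`).
Then `‖(∇w^h − a∇v)_potn‖²_{L²(Ω)} = ∫_{∂Ω}(h − h_v)Λ⁻¹(h − h_v)`, where `Λ` is the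
Dirichlet-to-Neumann map, so that `Λ⁻¹(h−h_v)` is the boundary trace of the harmonic
function `wd` with Neumann data `h − h_v`.

Abstract encoding: `E = (L²(Ω))^d`, `H1 = H¹(Ω)` with gradient `G`, `B = L²(∂Ω)` with
trace map `tr : H¹(Ω) → L²(∂Ω)`; `Kpotn = L²_potn(Ω)` is the closure of the range of `G`
(gradients of `H¹(Ω)` functions) and `(·)_potn` the orthogonal projection onto it;
`A` is multiplication by the symmetric uniformly elliptic matrix `a`. -/
theorem neumann_flux_norm_representation
    {E H1 B : Type*}
    [NormedAddCommGroup E] [InnerProductSpace ℝ E] [CompleteSpace E]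
    [NormedAddCommGroup B] [InnerProductSpace ℝ B] [CompleteSpace B]
    [AddCommGroup H1] [Module ℝ H1]
    (G : H1 →ₗ[ℝ] E) (tr : H1 →ₗ[ℝ] B)
    (Kpotn : Submodule ℝ E) [Kpotn.HasOrthogonalProjection]
    (hK : Kpotn = (LinearMap.range G).topologicalClosure)
    (A : E →ₗ[ℝ] E) (lmin lmax : ℝ) (hlmin : 0 < lmin)
    (hsym : ∀ ξ η : E, ⟪A ξ, η⟫ = ⟪ξ, A η⟫)
    (hell₁ : ∀ ξ : E, lmin * ‖ξ‖ ^ 2 ≤ ⟪ξ, A ξ⟫)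
    (hell₂ : ∀ ξ : E, ⟪ξ, A ξ⟫ ≤ lmax * ‖ξ‖ ^ 2)
    (h : B) (w : H1)
    (hw : ∀ φ : H1, ⟪G w, G φ⟫ = ⟪h, tr φ⟫)
    (v : H1) (hv : B)
    (hhv : ∀ φ : H1, ⟪A (G v), G φ⟫ = ⟪hv, tr φ⟫)
    (wd : H1)
    (hwd : ∀ φ : H1, ⟪G wd, G φ⟫ = ⟪h - hv, tr φ⟫) :
    ‖(Kpotn.orthogonalProjectionOnto (G w - A (G v)) : E)‖ ^ 2 = ⟪h - hv, tr wd⟫ := by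
  set ξ := G w - A (G v) with hξ
  have hproj : (Kpotn.orthogonalProjectionOnto ξ : E) = G wd := by
    have hmem : G wd ∈ Kpotn := by
      rw [hK]
      exact Submodule.le_topologicalClosure _ ⟨wd, rfl⟩
    have horth : ∀ z ∈ Kpotn, ⟪ξ - G wd, z⟫ = 0 := by
      intro z hz
      have hrange : LinearMap.range G ≤ LinearMap.ker (innerSL ℝ (ξ - G wd)).toLinearMap := by
        rintro _ ⟨φ, rfl⟩
        simp only [LinearMap.mem_ker, ContinuousLinearMap.coe_coe, innerSL_apply_apply]
        have := hw φ
        have h2 := hhv φ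
        have h3 := hwd φ
        simp only [hξ, inner_sub_left, map_sub]
        rw [inner_sub_left] at h3
        rw [this, h2, h3]
        ring
      have hcl : Kpotn ≤ LinearMap.ker (innerSL ℝ (ξ - G wd)).toLinearMap := by
        rw [hK]
        exact Submodule.topologicalClosure_minimal _ hrange
          (ContinuousLinearMap.isClosed_ker (innerSL ℝ (ξ - G wd)))
      have := hcl hz
      simpa [inner_sub_left] using this
    exact Submodule.eq_starProjection_of_mem_of_inner_eq_zero hmem horth
  rw [hproj, ← real_inner_self_eq_norm_sq, hwd]
end
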